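/- arXiv:2309.01242 — 3 statements merged into one kernel-verified Lean document; each statement's English description precedes it below -/
import Mathlib

section
/- Let f_j : ℝⁿ → ℝⁿ, j ∈ {1,…,M}, be diagonal continuous nonlinearities satisfying the sector condition, and let μ ∈ {1,…,M} be such that for all j ∈ {1,…,μ} and all i ∈ {1,…,n}, lim_{|ν|→∞} ∫_0^ν f_j^i(r) dr = +∞. Let P ∈ ℝ^{n×n} be symmetric positive semidefinite and Λ^j = diag(Λ_1^j,…,Λ_n^j), j ∈ {1,…,M}, be diagonal matrices with nonnegative entries, and suppose there exists ρ ∈ ℝ such that P + ρ ∑_{j=1}^{μ} Λ^j is positive definite. Then the function V(x) = x^⊤ P x + 2 ∑_{j=1}^{M} ∑_{i=1}^{n} Λ_i^j ∫_0^{x_i} f_j^i(ν) dν admits class-K∞ bounds: there exist α₁, α₂ of class K∞ such that α₁(‖x‖) ≤ V(x) ≤ α₂(‖x‖) for all x ∈ ℝⁿ. -/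
open Filter Matrix Finset

/-- Class `K∞` function: continuous, strictly increasing on `[0,∞)`, vanishing at `0`,
and unbounded. -/
def IsClassKInf (α : ℝ → ℝ) : Prop :=
  ContinuousOn α (Set.Ici 0) ∧ StrictMonoOn α (Set.Ici 0) ∧ α 0 = 0 ∧
    Tendsto α atTop atTop

/-- Diagonal matrix with nonnegative diagonal entries. -/
def IsNonnegDiag {n : ℕ} (A : Matrix (Fin n) (Fin n) ℝ) : Prop :=
  ∃ d : Fin n → ℝ, (∀ i, 0 ≤ d i) ∧ A = Matrix.diagonal d

theorem classKInf_sandwich {n : ℕ} (hn : 0 < n)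
    (V : EuclideanSpace ℝ (Fin n) → ℝ) (hVc : Continuous V) (hV0 : V 0 = 0)
    (hVpos : ∀ x, x ≠ 0 → 0 < V x)
    (hVub : ∀ C : ℝ, ∃ R : ℝ, 0 < R ∧ ∀ x : EuclideanSpace ℝ (Fin n), R ≤ ‖x‖ → C ≤ V x) :
    ∃ α₁ α₂ : ℝ → ℝ, IsClassKInf α₁ ∧ IsClassKInf α₂ ∧
      ∀ x : EuclideanSpace ℝ (Fin n), α₁ ‖x‖ ≤ V x ∧ V x ≤ α₂ ‖x‖ := by
  have hV0' : ∀ x : EuclideanSpace ℝ (Fin n), 0 ≤ V x := by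
    intro x
    rcases eq_or_ne x 0 with h | h
    · simp [h, hV0]
    · exact (hVpos x h).le
  -- a unit vector
  set e : EuclideanSpace ℝ (Fin n) := EuclideanSpace.single (⟨0, hn⟩ : Fin n) (1 : ℝ) with he
  have hnorme : ‖e‖ = 1 := by rw [he, EuclideanSpace.norm_single]; exact norm_one
  have hexists : ∀ r : ℝ, ∃ x : EuclideanSpace ℝ (Fin n), ‖x‖ = max r 0 := by
    intro r
    refine ⟨(max r 0) • e, ?_⟩
    rw [norm_smul, hnorme, mul_one, Real.norm_eq_abs, abs_of_nonneg (le_max_right r 0)]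
  -- the lower envelope
  set a : ℝ → ℝ := fun r => sInf (V '' {x : EuclideanSpace ℝ (Fin n) | r ≤ ‖x‖}) with ha
  have hne : ∀ r : ℝ, (V '' {x : EuclideanSpace ℝ (Fin n) | r ≤ ‖x‖}).Nonempty := by
    intro r
    obtain ⟨x, hx⟩ := hexists r
    exact ⟨V x, x, by simp [hx, le_max_left], rfl⟩
  have hbdd : ∀ r : ℝ, BddBelow (V '' {x : EuclideanSpace ℝ (Fin n) | r ≤ ‖x‖}) := by
    intro r
    exact ⟨0, by rintro y ⟨x, -, rfl⟩; exact hV0' x⟩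
  have ha0 : ∀ r, 0 ≤ a r := fun r =>
    le_csInf (hne r) (by rintro y ⟨x, -, rfl⟩; exact hV0' x)
  have hamono : Monotone a := by
    intro r s hrs
    exact csInf_le_csInf (hbdd r) (hne s)
      (Set.image_mono fun x hx => le_trans hrs hx)
  have haleV : ∀ (x : EuclideanSpace ℝ (Fin n)) (r : ℝ), r ≤ ‖x‖ → a r ≤ V x := by
    intro x r hr
    exact csInf_le (hbdd r) ⟨x, hr, rfl⟩
  have hapos : ∀ r : ℝ, 0 < r → 0 < a r := by
    intro r hr
    obtain ⟨R, hR0, hR⟩ := hVub 1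
    set R' := max r R with hR'
    set K : Set (EuclideanSpace ℝ (Fin n)) :=
      Metric.closedBall 0 R' ∩ {x : EuclideanSpace ℝ (Fin n) | r ≤ ‖x‖} with hK
    have hKc : IsCompact K :=
      (isCompact_closedBall (0 : EuclideanSpace ℝ (Fin n)) R').inter_right
        (isClosed_le continuous_const continuous_norm)
    obtain ⟨x₀, hx₀⟩ := hexists r
    have hx₀r : ‖x₀‖ = r := by rw [hx₀, max_eq_left hr.le]
    have hx₀K : x₀ ∈ K := by
      constructor
      · rw [mem_closedBall_zero_iff, hx₀r]; exact le_max_left r R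
      · simp [hx₀r]
    obtain ⟨z, hzK, hz⟩ := hKc.exists_isMinOn ⟨x₀, hx₀K⟩ hVc.continuousOn
    have hz' : ∀ y ∈ K, V z ≤ V y := fun y hy => hz hy
    have hzne : z ≠ 0 := by
      intro h
      have := hzK.2
      rw [h] at this
      simp at this
      linarith
    have hm : 0 < V z := hVpos z hzne
    have : min (V z) 1 ≤ a r := by
      apply le_csInf (hne r)
      rintro y ⟨x, hx, rfl⟩
      rcases le_or_gt ‖x‖ R' with h | h
      · exact le_trans (min_le_left _ _) (hz' x ⟨mem_closedBall_zero_iff.2 h, hx⟩)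
      · exact le_trans (min_le_right _ _) (hR x (le_trans (le_max_right r R) h.le))
    exact lt_of_lt_of_le (lt_min hm one_pos) this
  have hatop : Tendsto a atTop atTop := by
    rw [tendsto_atTop]
    intro C
    obtain ⟨R, hR0, hR⟩ := hVub C
    filter_upwards [eventually_ge_atTop R] with r hr
    exact le_csInf (hne r) (by rintro y ⟨x, hx, rfl⟩; exact hR x (le_trans hr hx))
  have hint : ∀ p q : ℝ, IntervalIntegrable a MeasureTheory.volume p q := fun p q =>
    hamono.intervalIntegrable
  set F : ℝ → ℝ := fun r => ∫ s in (0:ℝ)..r, a s with hF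
  have hFc : Continuous F := intervalIntegral.continuous_primitive hint 0
  have bound1 : ∀ r : ℝ, 0 ≤ r → F r ≤ r * a r := by
    intro r hr
    calc F r ≤ ∫ _ in (0:ℝ)..r, a r :=
          intervalIntegral.integral_mono_on hr (hint 0 r) intervalIntegrable_const
            (fun t ht => hamono ht.2)
      _ = r * a r := by simp
  have bound2 : ∀ p q : ℝ, p ≤ q → (q - p) * a p ≤ F q - F p := by
    intro p q hpq
    have h1 := intervalIntegral.integral_interval_sub_left (hint 0 q) (hint 0 p)
    simp only [hF]
    rw [h1]
    calc (q - p) * a p = ∫ _ in p..q, a p := by simp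
      _ ≤ ∫ s in p..q, a s :=
          intervalIntegral.integral_mono_on hpq intervalIntegrable_const (hint p q)
            (fun t ht => hamono ht.1)
  have hFnn : ∀ r : ℝ, 0 ≤ r → 0 ≤ F r := by
    intro r hr
    have h1 := bound2 0 r hr
    have h2 : F 0 = 0 := by simp [hF]
    nlinarith [ha0 0]
  set α₁ : ℝ → ℝ := fun r => F r / (1 + r) with hα₁
  have hα₁K : IsClassKInf α₁ := by
    refine ⟨?_, ?_, ?_, ?_⟩
    · apply ContinuousOn.div hFc.continuousOn (by fun_prop)
      intro r hr
      have : (0:ℝ) ≤ r := hr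
      positivity
    · intro r hr s hs hrs
      simp only [Set.mem_Ici] at hr hs
      have h1r : (0:ℝ) < 1 + r := by linarith
      have h1s : (0:ℝ) < 1 + s := by linarith
      simp only [hα₁]
      rw [div_lt_div_iff₀ h1r h1s]
      rcases eq_or_lt_of_le hr with h | h
      · have hF0 : F 0 = 0 := by simp [hF]
        rw [← h, hF0, zero_mul]
        have h2 := bound2 (s/2) s (by linarith)
        have h3 := hFnn (s/2) (by linarith)
        have h4 := hapos (s/2) (by linarith)
        nlinarith
      · have h2 := bound2 r s hrs.le
        have h3 := bound1 r hr
        have h4 := hapos r h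
        nlinarith
    · simp [hα₁, hF]
    · have key : ∀ r : ℝ, 2 ≤ r → a (r / 2) / 3 ≤ α₁ r := by
        intro r hr
        have h1r : (0:ℝ) < 1 + r := by linarith
        simp only [hα₁]
        rw [div_le_div_iff₀ (by norm_num) h1r]
        have h2 := bound2 (r/2) r (by linarith)
        have h3 := hFnn (r/2) (by linarith)
        have h4 := ha0 (r/2)
        nlinarith
      have h5 : Tendsto (fun r : ℝ => a (r / 2) / 3) atTop atTop := by
        apply Tendsto.atTop_div_const (by norm_num : (0:ℝ) < 3)
        exact hatop.comp (tendsto_id.atTop_div_const (by norm_num : (0:ℝ) < 2))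
      exact tendsto_atTop_mono' atTop (eventually_atTop.2 ⟨2, key⟩) h5
  have hα₁le : ∀ x : EuclideanSpace ℝ (Fin n), α₁ ‖x‖ ≤ V x := by
    intro x
    have h1 : (0:ℝ) < 1 + ‖x‖ := by positivity
    simp only [hα₁]
    rw [div_le_iff₀ h1]
    have h2 := bound1 ‖x‖ (norm_nonneg x)
    have h3 := haleV x ‖x‖ le_rfl
    have h4 := ha0 ‖x‖
    have h5 := hV0' x
    nlinarith [norm_nonneg x]
  -- upper envelope
  set b : ℝ → ℝ := fun r => sSup (V '' Metric.closedBall 0 (max r 0)) with hb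
  have hbne : ∀ r : ℝ, (V '' Metric.closedBall 0 (max r 0)).Nonempty :=
    fun r => ⟨V 0, 0, by simp [le_max_right], rfl⟩
  have hbbdd : ∀ r : ℝ, BddAbove (V '' Metric.closedBall 0 (max r 0)) := fun r =>
    ((isCompact_closedBall (0 : EuclideanSpace ℝ (Fin n)) (max r 0)).image hVc).bddAbove
  have hbmono : Monotone b := by
    intro r s hrs
    exact csSup_le_csSup (hbbdd s) (hbne r)
      (Set.image_mono (Metric.closedBall_subset_closedBall (max_le_max hrs le_rfl)))
  have hb0 : ∀ r : ℝ, 0 ≤ b r := by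
    intro r
    have h1 : V 0 ∈ V '' Metric.closedBall 0 (max r 0) := ⟨0, by simp [le_max_right], rfl⟩
    have h2 := le_csSup (hbbdd r) h1
    rwa [hV0] at h2
  have hbV : ∀ x : EuclideanSpace ℝ (Fin n), V x ≤ b ‖x‖ := by
    intro x
    exact le_csSup (hbbdd ‖x‖) ⟨x, by simp [mem_closedBall_zero_iff, le_max_left], rfl⟩
  have hbz : b 0 = 0 := by
    simp only [hb, max_self, Metric.closedBall_zero]
    rw [Set.image_singleton, csSup_singleton, hV0]
  have hbsmall : ∀ ε : ℝ, 0 < ε → ∃ δ : ℝ, 0 < δ ∧ ∀ r, 0 ≤ r → r < δ → b r ≤ ε := by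
    intro ε hε
    have h0 := hVc.continuousAt (x := (0 : EuclideanSpace ℝ (Fin n)))
    rw [Metric.continuousAt_iff] at h0
    obtain ⟨δ, hδ0, hδ⟩ := h0 ε hε
    refine ⟨δ, hδ0, fun r hr0 hrδ => ?_⟩
    apply Real.sSup_le _ hε.le
    rintro y ⟨x, hx, rfl⟩
    rw [mem_closedBall_zero_iff] at hx
    have hxδ : dist x 0 < δ := by
      rw [dist_zero_right]
      calc ‖x‖ ≤ max r 0 := hx
        _ = r := max_eq_left hr0
        _ < δ := hrδ
    have h2 := hδ hxδ
    rw [hV0, dist_zero_right, Real.norm_eq_abs] at h2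
    exact le_of_lt (lt_of_le_of_lt (le_abs_self _) h2)
  have hbint : ∀ p q : ℝ, IntervalIntegrable b MeasureTheory.volume p q := fun p q =>
    hbmono.intervalIntegrable
  set G : ℝ → ℝ := fun r => ∫ t in (1:ℝ)..2, b (r * t) with hG
  have hGint : ∀ (r p q : ℝ), 0 ≤ r →
      IntervalIntegrable (fun t => b (r * t)) MeasureTheory.volume p q := by
    intro r p q hr
    exact Monotone.intervalIntegrable
      (fun t₁ t₂ h => hbmono (mul_le_mul_of_nonneg_left h hr))
  have hGnn : ∀ r : ℝ, 0 ≤ G r := by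
    intro r
    apply intervalIntegral.integral_nonneg (by norm_num)
    intro t _
    exact hb0 _
  have hGmono : ∀ r s : ℝ, 0 ≤ r → r ≤ s → G r ≤ G s := by
    intro r s hr hrs
    apply intervalIntegral.integral_mono_on (by norm_num : (1:ℝ) ≤ 2)
      (hGint r 1 2 hr) (hGint s 1 2 (hr.trans hrs))
    intro t ht
    exact hbmono (mul_le_mul_of_nonneg_right hrs (by linarith [ht.1]))
  have hGb : ∀ r : ℝ, 0 ≤ r → b r ≤ G r := by
    intro r hr
    calc b r = ∫ _ in (1:ℝ)..2, b r := by norm_num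
      _ ≤ G r := by
          apply intervalIntegral.integral_mono_on (by norm_num : (1:ℝ) ≤ 2)
            intervalIntegrable_const (hGint r 1 2 hr)
          intro t ht
          exact hbmono (by nlinarith [ht.1])
  have hGle : ∀ r : ℝ, 0 ≤ r → G r ≤ b (2 * r) := by
    intro r hr
    calc G r ≤ ∫ _ in (1:ℝ)..2, b (2 * r) := by
          apply intervalIntegral.integral_mono_on (by norm_num : (1:ℝ) ≤ 2)
            (hGint r 1 2 hr) intervalIntegrable_const
          intro t ht
          exact hbmono (by nlinarith [ht.2])
      _ = b (2 * r) := by norm_num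
  set F₂ : ℝ → ℝ := fun r => ∫ s in (0:ℝ)..r, b s with hF₂
  have hF₂c : Continuous F₂ := intervalIntegral.continuous_primitive hbint 0
  have hGF : ∀ r : ℝ, 0 < r → G r = (F₂ (2 * r) - F₂ r) / r := by
    intro r hr
    have h1 := intervalIntegral.integral_interval_sub_left (hbint 0 (2*r)) (hbint 0 r)
    simp only [hG, hF₂]
    rw [h1, intervalIntegral.integral_comp_mul_left b hr.ne', smul_eq_mul, mul_one,
      mul_comm r 2, inv_mul_eq_div]
  set α₂ : ℝ → ℝ := fun r => r + G r with hα₂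
  have hα₂0 : α₂ 0 = 0 := by
    simp only [hα₂, hG, zero_mul, zero_add]
    simp [hbz]
  have hα₂K : IsClassKInf α₂ := by
    refine ⟨?_, ?_, hα₂0, ?_⟩
    · intro r hr
      rcases eq_or_lt_of_le (show (0:ℝ) ≤ r from hr) with h | h
      · -- continuity at 0 within Ici 0
        rw [← h]
        have hGz : Tendsto G (nhdsWithin 0 (Set.Ici 0)) (nhds 0) := by
          have hup : Tendsto (fun r : ℝ => b (2 * r)) (nhdsWithin 0 (Set.Ici 0)) (nhds 0) := by
            rw [Metric.tendsto_nhdsWithin_nhds]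
            intro ε hε
            obtain ⟨δ, hδ0, hδ⟩ := hbsmall (ε/2) (by linarith)
            refine ⟨δ/2, by linarith, fun {x} hx hd => ?_⟩
            rw [Real.dist_eq, sub_zero] at hd ⊢
            have hx0 : (0:ℝ) ≤ x := hx
            have h1 : b (2 * x) ≤ ε / 2 := hδ (2*x) (by linarith)
              (by rw [abs_of_nonneg hx0] at hd; linarith)
            rw [abs_of_nonneg (hb0 _)]
            linarith
          apply tendsto_of_tendsto_of_tendsto_of_le_of_le' tendsto_const_nhds hup
          · exact eventually_nhdsWithin_of_forall (fun r _ => hGnn r)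
          · exact eventually_nhdsWithin_of_forall (fun r hr => hGle r hr)
        have h2 : Tendsto α₂ (nhdsWithin 0 (Set.Ici 0)) (nhds 0) := by
          have h3 := (tendsto_nhdsWithin_of_tendsto_nhds (continuous_id.tendsto 0)).add hGz
          simpa using h3
        rw [ContinuousWithinAt, hα₂0]
        exact h2
      · -- continuity at r > 0
        apply ContinuousAt.continuousWithinAt
        have heq : (fun y : ℝ => y + (F₂ (2 * y) - F₂ y) / y) =ᶠ[nhds r] α₂ := by
          filter_upwards [eventually_gt_nhds h] with y hy
          simp only [hα₂]
          rw [hGF y hy]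
        apply ContinuousAt.congr _ heq
        apply ContinuousAt.add continuousAt_id
        apply ContinuousAt.div
        · exact ((hF₂c.comp (continuous_const.mul continuous_id)).sub hF₂c).continuousAt
        · exact continuousAt_id
        · exact h.ne'
    · intro r hr s hs hrs
      exact add_lt_add_of_lt_of_le hrs (hGmono r s hr hrs.le)
    · exact tendsto_atTop_mono (fun r => le_add_of_nonneg_right (hGnn r)) tendsto_id
  have hα₂ge : ∀ x : EuclideanSpace ℝ (Fin n), V x ≤ α₂ ‖x‖ := by
    intro x
    calc V x ≤ b ‖x‖ := hbV x
      _ ≤ G ‖x‖ := hGb ‖x‖ (norm_nonneg x)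
      _ ≤ α₂ ‖x‖ := le_add_of_nonneg_left (norm_nonneg x)
  exact ⟨α₁, α₂, hα₁K, hα₂K, fun x => ⟨hα₁le x, hα₂ge x⟩⟩

lemma quadform_add {n : ℕ} (A B : Matrix (Fin n) (Fin n) ℝ) (x : Fin n → ℝ) :
    x ⬝ᵥ (A + B).mulVec x = x ⬝ᵥ A.mulVec x + x ⬝ᵥ B.mulVec x := by
  rw [Matrix.add_mulVec, dotProduct_add]

lemma quadform_smul {n : ℕ} (c : ℝ) (A : Matrix (Fin n) (Fin n) ℝ) (x : Fin n → ℝ) :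
    x ⬝ᵥ (c • A).mulVec x = c * (x ⬝ᵥ A.mulVec x) := by
  rw [Matrix.smul_mulVec, dotProduct_smul, smul_eq_mul]

lemma quadform_sum {n : ℕ} (s : Finset ℕ) (A : ℕ → Matrix (Fin n) (Fin n) ℝ) (x : Fin n → ℝ) :
    x ⬝ᵥ (∑ j ∈ s, A j).mulVec x = ∑ j ∈ s, x ⬝ᵥ (A j).mulVec x := by
  classical
  induction s using Finset.induction_on with
  | empty => simp
  | @insert a s' ha ih => rw [Finset.sum_insert ha, Finset.sum_insert ha, quadform_add, ih]

lemma quadform_smul_vec {n : ℕ} (A : Matrix (Fin n) (Fin n) ℝ) (t : ℝ) (x : Fin n → ℝ) :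
    (t • x) ⬝ᵥ A.mulVec (t • x) = t ^ 2 * (x ⬝ᵥ A.mulVec x) := by
  rw [Matrix.mulVec_smul, smul_dotProduct, dotProduct_smul, smul_eq_mul,
    smul_eq_mul]
  ring

lemma quadform_diag {n : ℕ} (d : Fin n → ℝ) (x : Fin n → ℝ) :
    x ⬝ᵥ (Matrix.diagonal d).mulVec x = ∑ i, d i * x i ^ 2 := by
  simp only [dotProduct, Matrix.mulVec_diagonal]
  exact Finset.sum_congr rfl fun i _ => by ring


set_option maxHeartbeats 2000000

/-- **Class-`K∞` sandwich bounds for the Lyapunov function**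
`V(x) = xᵀ P x + 2 ∑_{j=1}^M ∑_{i=1}^n Λᵢʲ ∫₀^{xᵢ} f_jⁱ(ν) dν`,
where the diagonal continuous nonlinearities `f_jⁱ = g j i` satisfy the sector condition,
the nonlinearities with index `j ≤ μ` have divergent integrals, `P` is symmetric positive
semidefinite, the `Λʲ` are nonnegative diagonal matrices, and `P + ρ ∑_{j=1}^μ Λʲ` is
positive definite for some real `ρ`. -/
theorem lyapunov_classKInf_bounds
    (n M : ℕ) (hM : 1 ≤ M)
    (g : ℕ → Fin n → ℝ → ℝ)
    (hcont : ∀ j, 1 ≤ j → j ≤ M → ∀ i, Continuous (g j i))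
    (hsector : ∀ j, 1 ≤ j → j ≤ M → ∀ i, ∀ ν : ℝ, ν ≠ 0 → 0 < ν * g j i ν)
    (μ : ℕ) (hμ1 : 1 ≤ μ) (hμM : μ ≤ M)
    (hintdiv : ∀ j, 1 ≤ j → j ≤ μ → ∀ i,
      Tendsto (fun ν => ∫ r in (0:ℝ)..ν, g j i r) atTop atTop ∧
      Tendsto (fun ν => ∫ r in (0:ℝ)..ν, g j i r) atBot atTop)
    (P : Matrix (Fin n) (Fin n) ℝ) (hP : P.PosSemidef)
    (Λ : ℕ → Matrix (Fin n) (Fin n) ℝ)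
    (hΛ : ∀ j, 1 ≤ j → j ≤ M → IsNonnegDiag (Λ j))
    (ρ : ℝ)
    (hPd : (P + ρ • ∑ j ∈ Finset.Icc 1 μ, Λ j).PosDef)
    (V : EuclideanSpace ℝ (Fin n) → ℝ)
    (hV : ∀ x : EuclideanSpace ℝ (Fin n),
      V x = x ⬝ᵥ P.mulVec x +
        2 * ∑ j ∈ Finset.Icc 1 M, ∑ i, Λ j i i * ∫ ν in (0:ℝ)..(x i), g j i ν) :
    ∃ α₁ α₂ : ℝ → ℝ, IsClassKInf α₁ ∧ IsClassKInf α₂ ∧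
      ∀ x : EuclideanSpace ℝ (Fin n), α₁ ‖x‖ ≤ V x ∧ V x ≤ α₂ ‖x‖ := by
  have hidK : IsClassKInf id :=
    ⟨continuous_id.continuousOn, fun a _ b _ h => h, rfl, tendsto_id⟩
  rcases Nat.eq_zero_or_pos n with hn0 | hn
  · -- trivial case n = 0
    subst hn0
    refine ⟨id, id, hidK, hidK, fun x => ?_⟩
    have hx0 : V x = 0 := by
      rw [hV x]
      simp [dotProduct]
    have hnx : ‖x‖ = 0 := by
      have : x = 0 := Subsingleton.elim x 0
      simp [this]
    rw [hx0, hnx]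
    exact ⟨le_refl _, le_refl _⟩
  -- main case
  -- diagonal entries facts
  have hdnn : ∀ j, 1 ≤ j → j ≤ M → ∀ i, 0 ≤ Λ j i i := by
    intro j h1 h2 i
    obtain ⟨d, hd0, hdeq⟩ := hΛ j h1 h2
    rw [hdeq, Matrix.diagonal_apply_eq]
    exact hd0 i
  have hdiag : ∀ j, 1 ≤ j → j ≤ M → Λ j = Matrix.diagonal (fun i => Λ j i i) := by
    intro j h1 h2
    obtain ⟨d, hd0, hdeq⟩ := hΛ j h1 h2
    have hfun : (fun i => Λ j i i) = d := by
      funext i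
      rw [hdeq, Matrix.diagonal_apply_eq]
    rw [hfun, hdeq]
  -- sign of g
  have hg0 : ∀ j, 1 ≤ j → j ≤ M → ∀ i, g j i 0 = 0 := by
    intro j h1 h2 i
    have hc : Tendsto (g j i) (nhds 0) (nhds (g j i 0)) := (hcont j h1 h2 i).tendsto 0
    have hle : g j i 0 ≤ 0 := by
      apply le_of_tendsto (hc.mono_left nhdsWithin_le_nhds :
        Tendsto (g j i) (nhdsWithin 0 (Set.Iio 0)) (nhds (g j i 0)))
      filter_upwards [self_mem_nhdsWithin] with ν hν
      have hs := hsector j h1 h2 i ν (ne_of_lt hν)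
      nlinarith [show ν < (0:ℝ) from hν]
    have hge : 0 ≤ g j i 0 := by
      apply ge_of_tendsto (hc.mono_left nhdsWithin_le_nhds :
        Tendsto (g j i) (nhdsWithin 0 (Set.Ioi 0)) (nhds (g j i 0)))
      filter_upwards [self_mem_nhdsWithin] with ν hν
      have hs := hsector j h1 h2 i ν (ne_of_gt hν)
      nlinarith [show (0:ℝ) < ν from hν]
    linarith
  have hgnn : ∀ j, 1 ≤ j → j ≤ M → ∀ i, ∀ ν : ℝ, 0 ≤ ν → 0 ≤ g j i ν := by
    intro j h1 h2 i ν hν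
    rcases eq_or_lt_of_le hν with h | h
    · rw [← h, hg0 j h1 h2 i]
    · have hs := hsector j h1 h2 i ν (ne_of_gt h)
      nlinarith
  have hgnp : ∀ j, 1 ≤ j → j ≤ M → ∀ i, ∀ ν : ℝ, ν ≤ 0 → g j i ν ≤ 0 := by
    intro j h1 h2 i ν hν
    rcases eq_or_lt_of_le hν with h | h
    · rw [h, hg0 j h1 h2 i]
    · have hs := hsector j h1 h2 i ν (ne_of_lt h)
      nlinarith
  -- sign of the primitives
  have hFnn : ∀ j, 1 ≤ j → j ≤ M → ∀ i, ∀ t : ℝ, 0 ≤ ∫ ν in (0:ℝ)..t, g j i ν := by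
    intro j h1 h2 i t
    rcases le_or_gt 0 t with h | h
    · exact intervalIntegral.integral_nonneg h (fun u hu => hgnn j h1 h2 i u hu.1)
    · rw [intervalIntegral.integral_symm]
      have h2' : 0 ≤ ∫ ν in t..(0:ℝ), -g j i ν :=
        intervalIntegral.integral_nonneg h.le (fun u hu => by
          have := hgnp j h1 h2 i u hu.2
          linarith)
      rw [intervalIntegral.integral_neg] at h2'
      linarith
  have hFpos : ∀ j, 1 ≤ j → j ≤ M → ∀ i, ∀ t : ℝ, t ≠ 0 →
      0 < ∫ ν in (0:ℝ)..t, g j i ν := by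
    intro j h1 h2 i t ht
    rcases ht.lt_or_gt with h | h
    · have hpos : 0 < ∫ ν in t..(0:ℝ), -g j i ν := by
        apply intervalIntegral.intervalIntegral_pos_of_pos_on
          ((hcont j h1 h2 i).neg.intervalIntegrable t 0) _ h
        intro ν hν
        have hs := hsector j h1 h2 i ν (ne_of_lt hν.2)
        show 0 < -g j i ν
        nlinarith [hν.2]
      rw [intervalIntegral.integral_neg] at hpos
      rw [intervalIntegral.integral_symm]
      linarith
    · apply intervalIntegral.intervalIntegral_pos_of_pos_on
        ((hcont j h1 h2 i).intervalIntegrable 0 t) _ h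
      intro ν hν
      have hs := hsector j h1 h2 i ν (ne_of_gt hν.1)
      nlinarith [hν.1]
  -- nonnegativity of the sum term
  have hSnn : ∀ x : EuclideanSpace ℝ (Fin n),
      0 ≤ ∑ j ∈ Finset.Icc 1 M, ∑ i, Λ j i i * ∫ ν in (0:ℝ)..(x i), g j i ν := by
    intro x
    apply Finset.sum_nonneg
    intro j hj
    rw [Finset.mem_Icc] at hj
    apply Finset.sum_nonneg
    intro i _
    exact mul_nonneg (hdnn j hj.1 hj.2 i) (hFnn j hj.1 hj.2 i (x i))
  have hPx : ∀ x : Fin n → ℝ, 0 ≤ x ⬝ᵥ P.mulVec x := by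
    intro x
    have := hP.dotProduct_mulVec_nonneg x
    simpa using this
  have hQx : ∀ x : Fin n → ℝ, x ≠ 0 →
      0 < x ⬝ᵥ (P + ρ • ∑ j ∈ Finset.Icc 1 μ, Λ j).mulVec x := by
    intro x hx
    have := hPd.dotProduct_mulVec_pos hx
    simpa using this
  have hQform : ∀ x : Fin n → ℝ,
      x ⬝ᵥ (P + ρ • ∑ j ∈ Finset.Icc 1 μ, Λ j).mulVec x =
        x ⬝ᵥ P.mulVec x + ρ * ∑ j ∈ Finset.Icc 1 μ, ∑ i, Λ j i i * x i ^ 2 := by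
    intro x
    rw [quadform_add, quadform_smul, quadform_sum]
    congr 2
    apply Finset.sum_congr rfl
    intro j hj
    rw [Finset.mem_Icc] at hj
    rw [hdiag j hj.1 (hj.2.trans hμM), quadform_diag]
    apply Finset.sum_congr rfl
    intro i _
    rw [Matrix.diagonal_apply_eq]
  -- V at 0
  have hV0 : V 0 = 0 := by
    rw [hV 0]
    have h0 : ∀ i : Fin n, (0 : EuclideanSpace ℝ (Fin n)) i = 0 := fun i => rfl
    simp [h0]
  -- continuity
  have heval : ∀ i : Fin n, Continuous fun x : EuclideanSpace ℝ (Fin n) => x i :=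
    fun i => (EuclideanSpace.proj (𝕜 := ℝ) i).continuous
  have hVc : Continuous V := by
    have hVfun : V = fun x : EuclideanSpace ℝ (Fin n) => x ⬝ᵥ P.mulVec x +
        2 * ∑ j ∈ Finset.Icc 1 M, ∑ i, Λ j i i * ∫ ν in (0:ℝ)..(x i), g j i ν :=
      funext hV
    rw [hVfun]
    apply Continuous.add
    · unfold dotProduct Matrix.mulVec
      apply continuous_finset_sum
      intro i _
      exact (heval i).mul (continuous_finset_sum _ fun k _ =>
        (continuous_const.mul (heval k)))
    · apply Continuous.mul continuous_const
      apply continuous_finset_sum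
      intro j hj
      rw [Finset.mem_Icc] at hj
      apply continuous_finset_sum
      intro i _
      apply Continuous.mul continuous_const
      exact (intervalIntegral.continuous_primitive
        (fun p q => (hcont j hj.1 hj.2 i).intervalIntegrable p q) 0).comp (heval i)
  -- positivity
  have hVpos : ∀ x : EuclideanSpace ℝ (Fin n), x ≠ 0 → 0 < V x := by
    intro x hx
    by_contra hcon
    push_neg at hcon
    rw [hV x] at hcon
    have hA := hPx x
    have hS := hSnn x
    have hA0 : x ⬝ᵥ P.mulVec x = 0 := by linarith
    have hS0 : ∑ j ∈ Finset.Icc 1 M, ∑ i, Λ j i i * ∫ ν in (0:ℝ)..(x i), g j i ν = 0 := by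
      linarith
    have hterm : ∀ j ∈ Finset.Icc 1 M, ∀ i,
        Λ j i i * ∫ ν in (0:ℝ)..(x i), g j i ν = 0 := by
      intro j hj i
      have hj' := Finset.mem_Icc.mp hj
      have h1 := (Finset.sum_eq_zero_iff_of_nonneg
        (fun j hj => Finset.sum_nonneg fun i _ =>
          mul_nonneg (hdnn j (Finset.mem_Icc.mp hj).1 (Finset.mem_Icc.mp hj).2 i)
            (hFnn j (Finset.mem_Icc.mp hj).1 (Finset.mem_Icc.mp hj).2 i (x i)))).mp hS0 j hj
      exact (Finset.sum_eq_zero_iff_of_nonneg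
        (fun i _ => mul_nonneg (hdnn j hj'.1 hj'.2 i) (hFnn j hj'.1 hj'.2 i (x i)))).mp
          h1 i (Finset.mem_univ i)
    have hsq : ∀ j ∈ Finset.Icc 1 μ, ∀ i : Fin n, Λ j i i * x i ^ 2 = 0 := by
      intro j hj i
      have hj' := Finset.mem_Icc.mp hj
      have hjM : j ∈ Finset.Icc 1 M := Finset.mem_Icc.mpr ⟨hj'.1, hj'.2.trans hμM⟩
      rcases eq_or_ne (Λ j i i) 0 with h | h
      · rw [h, zero_mul]
      · have h2 := hterm j hjM i
        have h3 : (∫ ν in (0:ℝ)..(x i), g j i ν) = 0 := by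
          rcases mul_eq_zero.mp h2 with h' | h'
          · exact absurd h' h
          · exact h'
        have hxi : x i = 0 := by
          by_contra hxi
          exact (hFpos j hj'.1 (hj'.2.trans hμM) i (x i) hxi).ne' h3
        rw [hxi]
        ring
    have hx' : (fun i => x i) ≠ (0 : Fin n → ℝ) := by
      intro h
      apply hx
      ext i
      exact congrFun h i
    have := hQx x hx'
    rw [hQform] at this
    rw [hA0, Finset.sum_eq_zero (fun j hj => Finset.sum_eq_zero (fun i _ => hsq j hj i))] at this
    simp at this
  -- quadratic machinery
  classical
  set T : Finset (Fin n) := Finset.univ.filter (fun i => ∃ j ∈ Finset.Icc 1 μ, 0 < Λ j i i)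
    with hT
  have hTmem : ∀ i : Fin n, i ∈ T ↔ ∃ j ∈ Finset.Icc 1 μ, 0 < Λ j i i := by
    intro i
    simp [hT]
  set q : EuclideanSpace ℝ (Fin n) → ℝ := fun x => x ⬝ᵥ P.mulVec x + ∑ i ∈ T, x i ^ 2 with hq
  have hqc : Continuous q := by
    apply Continuous.add
    · unfold dotProduct Matrix.mulVec
      exact continuous_finset_sum _ fun i _ => (heval i).mul
        (continuous_finset_sum _ fun k _ => continuous_const.mul (heval k))
    · exact continuous_finset_sum _ fun i _ => (heval i).pow 2
  have hqnn : ∀ x : EuclideanSpace ℝ (Fin n), 0 ≤ q x := fun x =>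
    add_nonneg (hPx x) (Finset.sum_nonneg fun i _ => sq_nonneg _)
  have hqpos : ∀ x : EuclideanSpace ℝ (Fin n), x ≠ 0 → 0 < q x := by
    intro x hx
    rcases (hqnn x).lt_or_eq with h | h
    · exact h
    exfalso
    have hA := hPx x
    have hB : (0:ℝ) ≤ ∑ i ∈ T, x i ^ 2 := Finset.sum_nonneg fun i _ => sq_nonneg _
    have hq0 : q x = 0 := h.symm
    simp only [hq] at hq0
    have hA0 : x ⬝ᵥ P.mulVec x = 0 := by linarith
    have hB0 : ∑ i ∈ T, x i ^ 2 = 0 := by linarith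
    have hxT : ∀ i ∈ T, x i = 0 := by
      intro i hi
      have h1 := (Finset.sum_eq_zero_iff_of_nonneg (fun i _ => sq_nonneg (x i))).mp hB0 i hi
      exact pow_eq_zero_iff (n := 2) (by norm_num) |>.mp h1
    have hx' : (fun i => x i) ≠ (0 : Fin n → ℝ) := by
      intro h'
      exact hx (by ext i; exact congrFun h' i)
    have hQ := hQx x hx'
    rw [hQform] at hQ
    have hzero : ∑ j ∈ Finset.Icc 1 μ, ∑ i, Λ j i i * x i ^ 2 = 0 := by
      apply Finset.sum_eq_zero
      intro j hj
      apply Finset.sum_eq_zero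
      intro i _
      by_cases hiT : i ∈ T
      · rw [hxT i hiT]
        ring
      · have hil : Λ j i i = 0 := by
          rw [hTmem] at hiT
          push_neg at hiT
          have h2 := hiT j hj
          have hj' := Finset.mem_Icc.mp hj
          exact le_antisymm h2 (hdnn j hj'.1 (hj'.2.trans hμM) i)
        rw [hil, zero_mul]
    rw [hA0, hzero, mul_zero, add_zero] at hQ
    exact lt_irrefl 0 hQ
  -- minimum of q on the unit sphere
  set e : EuclideanSpace ℝ (Fin n) := EuclideanSpace.single (⟨0, hn⟩ : Fin n) (1:ℝ) with he
  have hnorme : ‖e‖ = 1 := by rw [he, EuclideanSpace.norm_single]; exact norm_one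
  have hsph : e ∈ Metric.sphere (0 : EuclideanSpace ℝ (Fin n)) 1 :=
    mem_sphere_zero_iff_norm.mpr hnorme
  obtain ⟨z, hzs, hzmin⟩ := (isCompact_sphere (0 : EuclideanSpace ℝ (Fin n)) 1).exists_isMinOn
    ⟨e, hsph⟩ hqc.continuousOn
  have hz1 : ‖z‖ = 1 := mem_sphere_zero_iff_norm.mp hzs
  set c : ℝ := q z with hc
  have hc0 : 0 < c := hqpos z (by intro h'; rw [h'] at hz1; simp at hz1)
  have hnormsq : ∀ x : EuclideanSpace ℝ (Fin n), ‖x‖ ^ 2 = ∑ i, x i ^ 2 := by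
    intro x
    rw [EuclideanSpace.norm_eq, Real.sq_sqrt (Finset.sum_nonneg fun i _ => sq_nonneg _)]
    apply Finset.sum_congr rfl
    intro i _
    rw [Real.norm_eq_abs, sq_abs]
  have hqlb : ∀ x : EuclideanSpace ℝ (Fin n), c * ‖x‖ ^ 2 ≤ q x := by
    intro x
    rcases eq_or_ne x 0 with h | h
    · rw [h]
      have hz0 : ∀ i : Fin n, (0 : EuclideanSpace ℝ (Fin n)) i = 0 := fun i => rfl
      simp [hq, dotProduct, hz0]
    · have hx0 : 0 < ‖x‖ := norm_pos_iff.mpr h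
      set u : EuclideanSpace ℝ (Fin n) := ‖x‖⁻¹ • x with hu
      have hu1 : ‖u‖ = 1 := by
        rw [hu, norm_smul, Real.norm_eq_abs, abs_of_pos (inv_pos.mpr hx0),
          inv_mul_cancel₀ hx0.ne']
      have hcu : c ≤ q u := isMinOn_iff.mp hzmin u (mem_sphere_zero_iff_norm.mpr hu1)
      have h1 : u ⬝ᵥ P.mulVec u = (‖x‖⁻¹) ^ 2 * (x ⬝ᵥ P.mulVec x) :=
        quadform_smul_vec P ‖x‖⁻¹ x
      have h2 : ∑ i ∈ T, u i ^ 2 = (‖x‖⁻¹) ^ 2 * ∑ i ∈ T, x i ^ 2 := by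
        rw [Finset.mul_sum]
        apply Finset.sum_congr rfl
        intro i _
        have : u i = ‖x‖⁻¹ * x i := rfl
        rw [this]
        ring
      have hqu : q u = (‖x‖⁻¹) ^ 2 * q x := by
        simp only [hq] at *
        rw [h1, h2]
        ring
      rw [hqu] at hcu
      have h8 := mul_le_mul_of_nonneg_right hcu (sq_nonneg ‖x‖)
      have h9 : (‖x‖⁻¹) ^ 2 * q x * ‖x‖ ^ 2 = q x := by
        field_simp
      exact le_of_le_of_eq h8 h9
  -- radial unboundedness
  have hVub : ∀ C : ℝ, ∃ R : ℝ, 0 < R ∧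
      ∀ x : EuclideanSpace ℝ (Fin n), R ≤ ‖x‖ → C ≤ V x := by
    intro C
    set C' : ℝ := max C 1 with hC'
    have hC'1 : (1:ℝ) ≤ C' := le_max_right _ _
    have hKex : ∀ i ∈ T, ∃ K : ℝ, 1 ≤ K ∧
        ∀ x : EuclideanSpace ℝ (Fin n), K ≤ |x i| → C' ≤ V x := by
      intro i hi
      rw [hTmem] at hi
      obtain ⟨j, hj, hΛpos⟩ := hi
      have hj' := Finset.mem_Icc.mp hj
      have hjM : j ≤ M := hj'.2.trans hμM
      obtain ⟨hTop, hBot⟩ := hintdiv j hj'.1 hj'.2 i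
      have hΛ2 : 0 < 2 * Λ j i i := by linarith
      obtain ⟨K₁, hK₁⟩ := eventually_atTop.mp (tendsto_atTop.mp hTop (C' / (2 * Λ j i i)))
      obtain ⟨K₂, hK₂⟩ := eventually_atBot.mp (tendsto_atTop.mp hBot (C' / (2 * Λ j i i)))
      refine ⟨max 1 (max K₁ (-K₂)), le_max_left _ _, ?_⟩
      intro x hx
      have hint' : C' / (2 * Λ j i i) ≤ ∫ ν in (0:ℝ)..(x i), g j i ν := by
        rcases le_or_gt 0 (x i) with hxi | hxi
        · apply hK₁
          rw [abs_of_nonneg hxi] at hx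
          exact le_trans (le_trans (le_max_left K₁ (-K₂)) (le_max_right 1 _)) hx
        · apply hK₂
          rw [abs_of_neg hxi] at hx
          have : -K₂ ≤ -x i := le_trans (le_trans (le_max_right K₁ (-K₂)) (le_max_right 1 _)) hx
          linarith
      rw [div_le_iff₀ hΛ2] at hint'
      have hterm : C' ≤ 2 * (Λ j i i * ∫ ν in (0:ℝ)..(x i), g j i ν) := by
        have hring : (∫ ν in (0:ℝ)..(x i), g j i ν) * (2 * Λ j i i)
            = 2 * (Λ j i i * ∫ ν in (0:ℝ)..(x i), g j i ν) := by ring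
        rw [hring] at hint'
        exact hint'
      have hjM' : j ∈ Finset.Icc 1 M := Finset.mem_Icc.mpr ⟨hj'.1, hjM⟩
      have hinner : Λ j i i * (∫ ν in (0:ℝ)..(x i), g j i ν) ≤
          ∑ i', Λ j i' i' * ∫ ν in (0:ℝ)..(x i'), g j i' ν :=
        Finset.single_le_sum
          (fun i' _ => mul_nonneg (hdnn j hj'.1 hjM i') (hFnn j hj'.1 hjM i' (x i')))
          (Finset.mem_univ i)
      have houter : (∑ i', Λ j i' i' * ∫ ν in (0:ℝ)..(x i'), g j i' ν) ≤
          ∑ j' ∈ Finset.Icc 1 M, ∑ i', Λ j' i' i' * ∫ ν in (0:ℝ)..(x i'), g j' i' ν :=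
        Finset.single_le_sum
          (fun j' hj' => Finset.sum_nonneg fun i' _ =>
            mul_nonneg (hdnn j' (Finset.mem_Icc.mp hj').1 (Finset.mem_Icc.mp hj').2 i')
              (hFnn j' (Finset.mem_Icc.mp hj').1 (Finset.mem_Icc.mp hj').2 i' (x i')))
          hjM'
      have hA := hPx x
      rw [hV x]
      linarith
    choose! K hK1 hK2 using hKex
    set K0 : ℝ := 1 + ∑ i, |K i| with hK0
    have habs : (0:ℝ) ≤ ∑ i, |K i| := Finset.sum_nonneg fun i _ => abs_nonneg _
    have hK0pos : 0 < K0 := by rw [hK0]; linarith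
    have hK0ge : ∀ i ∈ T, K i ≤ K0 := by
      intro i hi
      calc K i ≤ |K i| := le_abs_self _
        _ ≤ ∑ i', |K i'| := Finset.single_le_sum (f := fun i' => |K i'|)
              (fun _ _ => abs_nonneg _) (Finset.mem_univ i)
        _ ≤ K0 := by rw [hK0]; linarith
    set R : ℝ := 1 + Real.sqrt (2 * C' / c) + Real.sqrt (2 * n * K0 ^ 2 / c) with hR
    have hsq1 : (0:ℝ) ≤ 2 * C' / c := by positivity
    have hsq2 : (0:ℝ) ≤ 2 * n * K0 ^ 2 / c := by positivity
    have hR0 : 0 < R := by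
      rw [hR]
      have := Real.sqrt_nonneg (2 * C' / c)
      have := Real.sqrt_nonneg (2 * n * K0 ^ 2 / c)
      linarith
    refine ⟨R, hR0, ?_⟩
    intro x hxR
    have hx2 : ‖x‖ ^ 2 = ∑ i, x i ^ 2 := hnormsq x
    have hq1 := hqlb x
    simp only [hq] at hq1
    have hs1 : 2 * C' ≤ c * ‖x‖ ^ 2 := by
      have h1 : Real.sqrt (2 * C' / c) ≤ ‖x‖ := by
        have := Real.sqrt_nonneg (2 * n * K0 ^ 2 / c)
        rw [hR] at hxR
        linarith
      have h2 := pow_le_pow_left₀ (Real.sqrt_nonneg _) h1 2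
      rw [Real.sq_sqrt hsq1] at h2
      have h3 := mul_le_mul_of_nonneg_left h2 hc0.le
      have h4 : c * (2 * C' / c) = 2 * C' := by field_simp
      rw [h4] at h3
      exact h3
    have hs2 : 2 * (n:ℝ) * K0 ^ 2 ≤ c * ‖x‖ ^ 2 := by
      have h1 : Real.sqrt (2 * n * K0 ^ 2 / c) ≤ ‖x‖ := by
        have := Real.sqrt_nonneg (2 * C' / c)
        rw [hR] at hxR
        linarith
      have h2 := pow_le_pow_left₀ (Real.sqrt_nonneg _) h1 2
      rw [Real.sq_sqrt hsq2] at h2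
      have h3 := mul_le_mul_of_nonneg_left h2 hc0.le
      have h4 : c * (2 * n * K0 ^ 2 / c) = 2 * (n:ℝ) * K0 ^ 2 := by field_simp
      rw [h4] at h3
      exact h3
    rcases le_or_gt (c * ‖x‖ ^ 2) (2 * (x ⬝ᵥ P.mulVec x)) with hcase | hcase
    · have hCP : C' ≤ x ⬝ᵥ P.mulVec x := by linarith
      have hS := hSnn x
      rw [hV x]
      have hCC' : C ≤ C' := le_max_left _ _
      linarith
    · have hsumT : c * ‖x‖ ^ 2 ≤ 2 * ∑ i ∈ T, x i ^ 2 := by linarith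
      have hTcard : (T.card : ℝ) ≤ (n : ℝ) := by
        have h1 : T.card ≤ n := by
          have := Finset.card_le_univ T
          simpa using this
        exact_mod_cast h1
      have hxpos : 0 < ‖x‖ := lt_of_lt_of_le hR0 hxR
      have hTn : T.Nonempty := by
        rcases Finset.eq_empty_or_nonempty T with h' | h'
        · rw [h', Finset.sum_empty] at hsumT
          nlinarith [mul_pos hc0 (pow_pos hxpos 2)]
        · exact h'
      have hex : ∃ i ∈ T, K0 ^ 2 ≤ x i ^ 2 := by
        apply Finset.exists_le_of_sum_le hTn
        rw [Finset.sum_const, nsmul_eq_mul]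
        have h4 : (T.card : ℝ) * K0 ^ 2 ≤ (n : ℝ) * K0 ^ 2 :=
          mul_le_mul_of_nonneg_right hTcard (sq_nonneg _)
        linarith
      obtain ⟨i, hiT, hi2⟩ := hex
      have hKi : K i ≤ |x i| := by
        have hx2' : K0 ^ 2 ≤ |x i| ^ 2 := by rwa [sq_abs]
        have h1 : K0 ≤ |x i| := by nlinarith [abs_nonneg (x i), hK0pos]
        linarith [hK0ge i hiT]
      calc C ≤ C' := le_max_left _ _
        _ ≤ V x := hK2 i hiT x hKi
  exact classKInf_sandwich hn V hVc hV0 hVpos hVub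
end

section
/- Let x : [0,T) → ℝⁿ be a differentiable solution of ẋ(t) = ∑_{j=1}^{M} Γ_j f_j(x(t)) + B u(t), where the f_j are diagonal continuous nonlinearities, Γ_j ∈ ℝ^{n×n}, B ∈ ℝ^{n×m}, and u : [0,T) → ℝ^m is continuous. Let P ∈ ℝ^{n×n} be symmetric, Λ^j = diag(Λ_1^j,…,Λ_n^j), Ξ^j (j ∈ {1,…,M}) and Υ_{s,z} (0 ≤ s < z ≤ M) be diagonal matrices, and Φ ∈ ℝ^{n×n} symmetric. Define V(x) = x^⊤ P x + 2 ∑_{j=1}^{M} ∑_{i=1}^{n} Λ_i^j ∫_0^{x_i} f_j^i(ν) dν, and the block matrix Q = (Q_{a,b})_{a,b=1}^{M+2} with Q_{1,1} = 0, Q_{1,j+1} = P Γ_j + Υ_{0,j}, Q_{1,M+2} = P, Q_{j+1,j+1} = Γ_j^⊤ Λ^j + Λ^j Γ_j + Ξ^j, Q_{s+1,z+1} = Γ_s^⊤ Λ^z + Λ^s Γ_z + Υ_{s,z} for 1 ≤ s < z ≤ M, Q_{j+1,M+2} = Λ^j, Q_{M+2,M+2} = −Φ. Then t ↦ V(x(t))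 is differentiable on [0,T) and, with ξ(t) = [x(t); f_1(x(t)); …; f_M(x(t)); B u(t)] ∈ ℝ^{n(M+2)}, d/dt V(x(t)) = ξ(t)^⊤ Q ξ(t) − ∑_{j=1}^{M} f_j(x(t))^⊤ Ξ^j f_j(x(t)) − 2 ∑_{j=1}^{M} x(t)^⊤ Υ_{0,j} f_j(x(t)) − 2 ∑_{s=1}^{M−1} ∑_{z=s+1}^{M} f_s(x(t))^⊤ Υ_{s,z} f_z(x(t)) + (B u(t))^⊤ Φ (B u(t)). -/
open Finset Matrix

private lemma dotT {n : ℕ} (A : Matrix (Fin n) (Fin n) ℝ) (v w : Fin n → ℝ) :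
    v ⬝ᵥ Aᵀ.mulVec w = w ⬝ᵥ A.mulVec v := by
  rw [Matrix.mulVec_transpose, dotProduct_comm, ← Matrix.dotProduct_mulVec]

private lemma symm_shift {n : ℕ} {A : Matrix (Fin n) (Fin n) ℝ} (hA : A.IsSymm)
    (v w : Fin n → ℝ) : A.mulVec v ⬝ᵥ w = v ⬝ᵥ A.mulVec w := by
  conv_lhs => rw [dotProduct_comm, ← hA.eq]
  exact dotT A w v

private lemma diag_dot {n : ℕ} {A : Matrix (Fin n) (Fin n) ℝ} (hA : A.IsDiag)
    (v w : Fin n → ℝ) : v ⬝ᵥ A.mulVec w = ∑ i, A i i * (v i * w i) := by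
  simp only [dotProduct, Matrix.mulVec, dotProduct]
  refine Finset.sum_congr rfl fun i _ => ?_
  rw [Finset.sum_eq_single i (fun k _ hk => by rw [hA hk.symm, zero_mul])
    (fun h => absurd (Finset.mem_univ i) h)]
  ring

private lemma range_split (M : ℕ) (h : ℕ → ℝ) :
    ∑ a ∈ range (M + 2), h a = h 0 + (∑ a ∈ Icc 1 M, h a) + h (M + 1) := by
  have e : range (M + 2) = insert 0 (insert (M + 1) (Icc 1 M)) := by
    ext a; simp only [Finset.mem_range, Finset.mem_insert, Finset.mem_Icc]; omega
  rw [e, Finset.sum_insert (by simp only [Finset.mem_insert, Finset.mem_Icc]; omega),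
    Finset.sum_insert (by simp only [Finset.mem_Icc]; omega)]
  ring

private lemma tri_eq (M : ℕ) (T : ℕ → ℕ → ℝ) :
    ∑ s ∈ Icc 1 M, ∑ z ∈ Icc 1 M, (if s < z then T s z else 0)
      = ∑ s ∈ Icc 1 (M - 1), ∑ z ∈ Icc (s + 1) M, T s z := by
  have hinner : ∀ s : ℕ, ∑ z ∈ Icc 1 M, (if s < z then T s z else 0)
      = ∑ z ∈ Icc (s + 1) M, T s z := by
    intro s
    rw [← Finset.sum_filter]
    refine Finset.sum_congr ?_ fun _ _ => rfl
    ext z; simp only [Finset.mem_filter, Finset.mem_Icc]; omega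
  simp only [hinner]
  rcases Nat.eq_zero_or_pos M with hM | hM
  · subst hM; simp
  · have e : Icc 1 M = insert M (Icc 1 (M - 1)) := by
      ext a; simp only [Finset.mem_insert, Finset.mem_Icc]; omega
    rw [e, Finset.sum_insert (by simp only [Finset.mem_Icc]; omega),
      Finset.Icc_eq_empty (by omega), Finset.sum_empty, zero_add]

private lemma square_split (M : ℕ) (S : ℕ → ℕ → ℝ) :
    ∑ s ∈ Icc 1 M, ∑ z ∈ Icc 1 M, S s z
      = (∑ j ∈ Icc 1 M, S j j)
        + ∑ s ∈ Icc 1 (M - 1), ∑ z ∈ Icc (s + 1) M, (S s z + S z s) := by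
  have key : ∀ s z : ℕ, S s z = (if s < z then S s z else 0) + (if s = z then S s z else 0)
      + (if z < s then S s z else 0) := by
    intro s z
    rcases lt_trichotomy s z with h | h | h
    · simp [h, h.ne, (lt_asymm h)]
    · simp [h, lt_irrefl]
    · simp [h, h.ne', (lt_asymm h)]
  calc ∑ s ∈ Icc 1 M, ∑ z ∈ Icc 1 M, S s z
      = ∑ s ∈ Icc 1 M, ∑ z ∈ Icc 1 M, ((if s < z then S s z else 0)
          + (if s = z then S s z else 0) + (if z < s then S s z else 0)) := by
        exact Finset.sum_congr rfl fun s _ => Finset.sum_congr rfl fun z _ => key s z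
    _ = (∑ s ∈ Icc 1 M, ∑ z ∈ Icc 1 M, (if s < z then S s z else 0))
        + (∑ s ∈ Icc 1 M, ∑ z ∈ Icc 1 M, (if s = z then S s z else 0))
        + (∑ s ∈ Icc 1 M, ∑ z ∈ Icc 1 M, (if z < s then S s z else 0)) := by
        simp only [Finset.sum_add_distrib]
    _ = (∑ s ∈ Icc 1 (M - 1), ∑ z ∈ Icc (s + 1) M, S s z)
        + (∑ j ∈ Icc 1 M, S j j)
        + (∑ s ∈ Icc 1 (M - 1), ∑ z ∈ Icc (s + 1) M, S z s) := by
        have hdiag : ∑ s ∈ Icc 1 M, ∑ z ∈ Icc 1 M, (if s = z then S s z else 0)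
            = ∑ j ∈ Icc 1 M, S j j :=
          Finset.sum_congr rfl fun s hs => by
            rw [Finset.sum_ite_eq (Icc 1 M) s (fun z => S s z), if_pos hs]
        have hlow : ∑ s ∈ Icc 1 M, ∑ z ∈ Icc 1 M, (if z < s then S s z else 0)
            = ∑ s ∈ Icc 1 (M - 1), ∑ z ∈ Icc (s + 1) M, S z s := by
          rw [Finset.sum_comm]
          exact tri_eq M (fun s z => S z s)
        rw [hdiag, hlow, tri_eq M S]
    _ = _ := by simp only [Finset.sum_add_distrib]; ring

private lemma dot_sum {n : ℕ} (v : Fin n → ℝ) (s : Finset ℕ) (w : ℕ → Fin n → ℝ) :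
    v ⬝ᵥ (∑ z ∈ s, w z) = ∑ z ∈ s, v ⬝ᵥ w z := by
  simp only [dotProduct, Finset.sum_apply, Finset.mul_sum]
  exact Finset.sum_comm

private lemma mv_sum {n : ℕ} (A : Matrix (Fin n) (Fin n) ℝ) (s : Finset ℕ) (w : ℕ → Fin n → ℝ) :
    A.mulVec (∑ z ∈ s, w z) = ∑ z ∈ s, A.mulVec (w z) := by
  simpa only [Matrix.mulVecLin_apply] using map_sum A.mulVecLin w s
/-- **Derivative identity for the Lyapunov function along solutions** of
`ẋ = ∑_{j=1}^M Γ_j f_j(x) + B u` (the computation of `V̇` in the proof of Theorem 1).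
With `V(x) = xᵀ P x + 2 ∑_j ∑_i Λᵢʲ ∫₀^{xᵢ} f_jⁱ`, the extended vector
`ξ = [x; f_1(x); …; f_M(x); Bu]` and the block matrix `Q` as in the statement,
`d/dt V(x(t)) = ξᵀ Q ξ − ∑_j f_jᵀ Ξʲ f_j − 2 ∑_j xᵀ Υ₀ⱼ f_j
  − 2 ∑_{s<z} f_sᵀ Υ_{s,z} f_z + (Bu)ᵀ Φ (Bu)`. -/
theorem lyapunov_derivative_identity
    (n m M : ℕ) (hM : 1 ≤ M)
    (Γ : ℕ → Matrix (Fin n) (Fin n) ℝ) (B : Matrix (Fin n) (Fin m) ℝ)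
    (g : ℕ → Fin n → ℝ → ℝ)
    (hcont : ∀ j, 1 ≤ j → j ≤ M → ∀ i, Continuous (g j i))
    (P : Matrix (Fin n) (Fin n) ℝ) (hPsymm : P.IsSymm)
    (Λ Ξ : ℕ → Matrix (Fin n) (Fin n) ℝ) (Υ : ℕ → ℕ → Matrix (Fin n) (Fin n) ℝ)
    (hΛ : ∀ j, 1 ≤ j → j ≤ M → (Λ j).IsDiag)
    (hΞ : ∀ j, 1 ≤ j → j ≤ M → (Ξ j).IsDiag)
    (hΥ : ∀ s z, s < z → z ≤ M → (Υ s z).IsDiag)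
    (Φ : Matrix (Fin n) (Fin n) ℝ) (hΦsymm : Φ.IsSymm)
    -- the Lyapunov function V
    (V : (Fin n → ℝ) → ℝ)
    (hV : ∀ y : Fin n → ℝ,
      V y = y ⬝ᵥ P.mulVec y +
        2 * ∑ j ∈ Finset.Icc 1 M, ∑ i, Λ j i i * ∫ ν in (0:ℝ)..(y i), g j i ν)
    -- the block matrix Q
    (Qb : ℕ → ℕ → Matrix (Fin n) (Fin n) ℝ)
    (Q : Matrix (Fin (M + 2) × Fin n) (Fin (M + 2) × Fin n) ℝ)
    (hQ : ∀ (a b : Fin (M + 2)) (i k : Fin n), Q (a, i) (b, k) = Qb a.val b.val i k)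
    (hQb00 : Qb 0 0 = 0)
    (hQb0j : ∀ j, 1 ≤ j → j ≤ M → Qb 0 j = P * Γ j + Υ 0 j)
    (hQb0last : Qb 0 (M + 1) = P)
    (hQbjj : ∀ j, 1 ≤ j → j ≤ M → Qb j j = (Γ j)ᵀ * Λ j + Λ j * Γ j + Ξ j)
    (hQbsz : ∀ s z, 1 ≤ s → s < z → z ≤ M → Qb s z = (Γ s)ᵀ * Λ z + Λ s * Γ z + Υ s z)
    (hQbjlast : ∀ j, 1 ≤ j → j ≤ M → Qb j (M + 1) = Λ j)
    (hQblast : Qb (M + 1) (M + 1) = -Φ)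
    (hQbsym : ∀ a b, a ≤ M + 1 → b ≤ M + 1 → Qb b a = (Qb a b)ᵀ)
    -- a solution on [0, T) with continuous input
    (T : ℝ) (u : ℝ → Fin m → ℝ) (hu : Continuous u)
    (x : ℝ → Fin n → ℝ)
    (hx : ∀ t ∈ Set.Ico 0 T, HasDerivAt x
      (∑ j ∈ Finset.Icc 1 M, (Γ j).mulVec (fun i => g j i (x t i)) + B.mulVec (u t)) t)
    -- the extended vector ξ(t) = [x(t); f_1(x(t)); …; f_M(x(t)); B u(t)]
    (ξ : ℝ → Fin (M + 2) × Fin n → ℝ)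
    (hξ : ∀ t (p : Fin (M + 2) × Fin n),
      ξ t p = if (p.1 : ℕ) = 0 then x t p.2
        else if (p.1 : ℕ) ≤ M then g p.1 p.2 (x t p.2)
        else B.mulVec (u t) p.2) :
    ∀ t ∈ Set.Ico 0 T, HasDerivAt (fun s => V (x s))
      (ξ t ⬝ᵥ Q.mulVec (ξ t)
        - ∑ j ∈ Finset.Icc 1 M,
            (fun i => g j i (x t i)) ⬝ᵥ (Ξ j).mulVec (fun i => g j i (x t i))
        - 2 * ∑ j ∈ Finset.Icc 1 M, x t ⬝ᵥ (Υ 0 j).mulVec (fun i => g j i (x t i))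
        - 2 * ∑ s ∈ Finset.Icc 1 (M - 1), ∑ z ∈ Finset.Icc (s + 1) M,
            (fun i => g s i (x t i)) ⬝ᵥ (Υ s z).mulVec (fun i => g z i (x t i))
        + B.mulVec (u t) ⬝ᵥ Φ.mulVec (B.mulVec (u t))) t := by
  intro t ht
  set X : Fin n → ℝ := x t with hX
  set W : Fin n → ℝ := B.mulVec (u t) with hW
  obtain ⟨d, hd⟩ : ∃ dv : Fin n → ℝ,
      dv = (∑ j ∈ Finset.Icc 1 M, (Γ j).mulVec fun i => g j i (X i)) + W := ⟨_, rfl⟩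
  have hxt : HasDerivAt x d t := by
    rw [hd, hX, hW]; exact hx t ht
  have hxi : ∀ i, HasDerivAt (fun s => x s i) (d i) t := fun i => hasDerivAt_pi.mp hxt i
  -- derivative of the quadratic part
  have hquad : HasDerivAt (fun s => x s ⬝ᵥ P.mulVec (x s))
      (d ⬝ᵥ P.mulVec X + X ⬝ᵥ P.mulVec d) t := by
    have h1 : HasDerivAt (fun s => ∑ i, ∑ k, x s i * (P i k * x s k))
        (∑ i, ∑ k, (d i * (P i k * X k) + X i * (P i k * d k))) t := by
      rw [hX]
      exact HasDerivAt.fun_sum fun i _ => HasDerivAt.fun_sum fun k _ =>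
        (hxi i).mul ((hxi k).const_mul (P i k))
    have h2 : (fun s => x s ⬝ᵥ P.mulVec (x s))
        = fun s => ∑ i, ∑ k, x s i * (P i k * x s k) := by
      funext s
      simp [dotProduct, Matrix.mulVec, Finset.mul_sum]
    rw [h2]
    convert h1 using 1
    simp [dotProduct, Matrix.mulVec, Finset.mul_sum, Finset.sum_add_distrib]
  -- derivative of the integral part
  have hInt : ∀ j ∈ Finset.Icc 1 M, HasDerivAt
      (fun s => ∑ i, Λ j i i * ∫ ν in (0:ℝ)..(x s i), g j i ν)
      (∑ i, Λ j i i * (g j i (X i) * d i)) t := by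
    intro j hj
    rw [Finset.mem_Icc] at hj
    refine HasDerivAt.fun_sum fun i _ => HasDerivAt.const_mul _ ?_
    have h1 : HasDerivAt (fun y => ∫ ν in (0:ℝ)..y, g j i ν) (g j i (X i)) (X i) :=
      ((hcont j hj.1 hj.2 i).integral_hasStrictDerivAt 0 (X i)).hasDerivAt
    have h2 : HasDerivAt (fun s => x s i) (d i) t := hxi i
    have h3 := HasDerivAt.comp (h := fun s => x s i) t (by rw [hX] at h1; exact h1) h2
    exact h3
  have hVdiff : HasDerivAt (fun s => V (x s))
      ((d ⬝ᵥ P.mulVec X + X ⬝ᵥ P.mulVec d)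
        + 2 * ∑ j ∈ Finset.Icc 1 M, ∑ i, Λ j i i * (g j i (X i) * d i)) t := by
    have hfun : (fun s => V (x s)) = fun s => x s ⬝ᵥ P.mulVec (x s)
        + 2 * ∑ j ∈ Finset.Icc 1 M, ∑ i, Λ j i i * ∫ ν in (0:ℝ)..(x s i), g j i ν := by
      funext s; rw [hV]
    rw [hfun]
    exact hquad.add ((HasDerivAt.fun_sum hInt).const_mul 2)
  -- the block vector
  obtain ⟨blk, hblk⟩ : ∃ blk : ℕ → Fin n → ℝ,
      blk = fun a => if a = 0 then X else if a ≤ M then (fun i => g a i (X i)) else W := ⟨_, rfl⟩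
  have hblk0 : blk 0 = X := by simp [hblk]
  have hblkj : ∀ j, 1 ≤ j → j ≤ M → blk j = fun i => g j i (X i) := by
    intro j h1 h2
    simp only [hblk]
    rw [if_neg (by omega), if_pos h2]
  have hblkL : blk (M + 1) = W := by
    simp only [hblk]
    rw [if_neg (by omega), if_neg (by omega)]
  obtain ⟨S, hS⟩ : ∃ S : ℕ → ℕ → ℝ,
      S = fun a b => blk a ⬝ᵥ (Qb a b).mulVec (blk b) := ⟨_, rfl⟩
  have hA : ∀ (b : Fin (M + 2)) (k : Fin n), ξ t (b, k) = blk b.val k := by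
    intro b k
    simp only [hξ, hblk, hX, hW]
    split_ifs <;> rfl
  -- expansion of the quadratic form in blocks
  have hexpA : ξ t ⬝ᵥ Q.mulVec (ξ t)
      = ∑ a : Fin (M + 2), ∑ b : Fin (M + 2), S a.val b.val := by
    simp only [dotProduct, Matrix.mulVec, Fintype.sum_prod_type, hQ, hA, hS, Finset.mul_sum]
    exact Finset.sum_congr rfl fun a _ => Finset.sum_comm
  have hexpB : ξ t ⬝ᵥ Q.mulVec (ξ t)
      = ∑ a ∈ range (M + 2), ∑ b ∈ range (M + 2), S a b := by
    rw [hexpA]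
    calc ∑ a : Fin (M + 2), ∑ b : Fin (M + 2), S a.val b.val
        = ∑ a : Fin (M + 2), ∑ b ∈ range (M + 2), S a.val b :=
          Finset.sum_congr rfl fun a _ => Fin.sum_univ_eq_sum_range (fun b => S a.val b) (M + 2)
      _ = _ := Fin.sum_univ_eq_sum_range (fun a => ∑ b ∈ range (M + 2), S a b) (M + 2)
  -- values of the blocks
  have hSs : ∀ a b, a ≤ M + 1 → b ≤ M + 1 → S b a = S a b := by
    intro a b ha hb
    simp only [hS]
    rw [hQbsym a b ha hb, dotT]
  have eS00 : S 0 0 = 0 := by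
    simp only [hS, hQb00, Matrix.zero_mulVec, dotProduct_zero]
  have eS0j : ∀ j, 1 ≤ j → j ≤ M → S 0 j
      = X ⬝ᵥ P.mulVec ((Γ j).mulVec fun i => g j i (X i))
        + X ⬝ᵥ (Υ 0 j).mulVec fun i => g j i (X i) := by
    intro j h1 h2
    simp only [hS]
    rw [hblk0, hblkj j h1 h2, hQb0j j h1 h2, Matrix.add_mulVec, dotProduct_add,
      ← Matrix.mulVec_mulVec]
  have eS0L : S 0 (M + 1) = X ⬝ᵥ P.mulVec W := by
    simp only [hS]
    rw [hblk0, hblkL, hQb0last]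
  have eSjj : ∀ j, 1 ≤ j → j ≤ M → S j j
      = 2 * ((fun i => g j i (X i)) ⬝ᵥ (Λ j).mulVec ((Γ j).mulVec fun i => g j i (X i)))
        + (fun i => g j i (X i)) ⬝ᵥ (Ξ j).mulVec fun i => g j i (X i) := by
    intro j h1 h2
    simp only [hS]
    rw [hblkj j h1 h2, hQbjj j h1 h2, Matrix.add_mulVec, Matrix.add_mulVec,
      dotProduct_add, dotProduct_add, ← Matrix.mulVec_mulVec, ← Matrix.mulVec_mulVec,
      dotT (Γ j), symm_shift (hΛ j h1 h2).isSymm]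
    ring
  have eSsz : ∀ s z, 1 ≤ s → s < z → z ≤ M → S s z
      = (fun i => g s i (X i)) ⬝ᵥ (Λ s).mulVec ((Γ z).mulVec fun i => g z i (X i))
        + (fun i => g z i (X i)) ⬝ᵥ (Λ z).mulVec ((Γ s).mulVec fun i => g s i (X i))
        + (fun i => g s i (X i)) ⬝ᵥ (Υ s z).mulVec fun i => g z i (X i) := by
    intro s z h1 h2 h3
    simp only [hS]
    rw [hblkj s h1 (by omega), hblkj z (by omega) h3, hQbsz s z h1 h2 h3,
      Matrix.add_mulVec, Matrix.add_mulVec, dotProduct_add, dotProduct_add,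
      ← Matrix.mulVec_mulVec, ← Matrix.mulVec_mulVec,
      dotT (Γ s), symm_shift (hΛ z (by omega) h3).isSymm]
    ring
  have eSjL : ∀ j, 1 ≤ j → j ≤ M → S j (M + 1)
      = (fun i => g j i (X i)) ⬝ᵥ (Λ j).mulVec W := by
    intro j h1 h2
    simp only [hS]
    rw [hblkj j h1 h2, hblkL, hQbjlast j h1 h2]
  have eSLL : S (M + 1) (M + 1) = -(W ⬝ᵥ Φ.mulVec W) := by
    simp only [hS]
    rw [hblkL, hQblast, Matrix.neg_mulVec, dotProduct_neg]
  -- assembled expansion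
  have P2 : ∑ b ∈ Icc 1 M, S 0 b
      = (∑ j ∈ Finset.Icc 1 M, X ⬝ᵥ P.mulVec ((Γ j).mulVec fun i => g j i (X i)))
        + ∑ j ∈ Finset.Icc 1 M, X ⬝ᵥ (Υ 0 j).mulVec fun i => g j i (X i) := by
    rw [← Finset.sum_add_distrib]
    refine Finset.sum_congr rfl fun b hb => ?_
    rw [Finset.mem_Icc] at hb
    exact eS0j b hb.1 hb.2
  have P4 : ∑ a ∈ Icc 1 M, S a 0 = ∑ b ∈ Icc 1 M, S 0 b := by
    refine Finset.sum_congr rfl fun a ha => ?_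
    rw [Finset.mem_Icc] at ha
    exact hSs 0 a (by omega) (by omega)
  have P5 : ∑ a ∈ Icc 1 M, ∑ b ∈ Icc 1 M, S a b
      = (2 * ∑ j ∈ Finset.Icc 1 M,
            (fun i => g j i (X i)) ⬝ᵥ (Λ j).mulVec ((Γ j).mulVec fun i => g j i (X i)))
        + (∑ j ∈ Finset.Icc 1 M,
            (fun i => g j i (X i)) ⬝ᵥ (Ξ j).mulVec fun i => g j i (X i))
        + (2 * ∑ s ∈ Finset.Icc 1 (M - 1), ∑ z ∈ Finset.Icc (s + 1) M,
            ((fun i => g s i (X i)) ⬝ᵥ (Λ s).mulVec ((Γ z).mulVec fun i => g z i (X i))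
              + (fun i => g z i (X i)) ⬝ᵥ (Λ z).mulVec ((Γ s).mulVec fun i => g s i (X i))))
        + 2 * ∑ s ∈ Finset.Icc 1 (M - 1), ∑ z ∈ Finset.Icc (s + 1) M,
            (fun i => g s i (X i)) ⬝ᵥ (Υ s z).mulVec fun i => g z i (X i) := by
    rw [square_split M S]
    have hdg : ∑ j ∈ Icc 1 M, S j j
        = (2 * ∑ j ∈ Finset.Icc 1 M,
            (fun i => g j i (X i)) ⬝ᵥ (Λ j).mulVec ((Γ j).mulVec fun i => g j i (X i)))
          + ∑ j ∈ Finset.Icc 1 M,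
            (fun i => g j i (X i)) ⬝ᵥ (Ξ j).mulVec fun i => g j i (X i) := by
      rw [Finset.mul_sum, ← Finset.sum_add_distrib]
      refine Finset.sum_congr rfl fun j hj => ?_
      rw [Finset.mem_Icc] at hj
      exact eSjj j hj.1 hj.2
    have htr : ∑ s ∈ Icc 1 (M - 1), ∑ z ∈ Icc (s + 1) M, (S s z + S z s)
        = (2 * ∑ s ∈ Finset.Icc 1 (M - 1), ∑ z ∈ Finset.Icc (s + 1) M,
            ((fun i => g s i (X i)) ⬝ᵥ (Λ s).mulVec ((Γ z).mulVec fun i => g z i (X i))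
              + (fun i => g z i (X i)) ⬝ᵥ (Λ z).mulVec ((Γ s).mulVec fun i => g s i (X i))))
          + 2 * ∑ s ∈ Finset.Icc 1 (M - 1), ∑ z ∈ Finset.Icc (s + 1) M,
            (fun i => g s i (X i)) ⬝ᵥ (Υ s z).mulVec fun i => g z i (X i) := by
      rw [Finset.mul_sum, Finset.mul_sum, ← Finset.sum_add_distrib]
      refine Finset.sum_congr rfl fun s hs => ?_
      rw [Finset.mem_Icc] at hs
      rw [Finset.mul_sum, Finset.mul_sum, ← Finset.sum_add_distrib]
      refine Finset.sum_congr rfl fun z hz => ?_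
      rw [Finset.mem_Icc] at hz
      have h1s : 1 ≤ s := hs.1
      have hsz : s < z := by omega
      have hzM : z ≤ M := hz.2
      rw [hSs s z (by omega) (by omega), eSsz s z h1s hsz hzM]
      ring
    rw [hdg, htr]
    ring
  have P6 : ∑ a ∈ Icc 1 M, S a (M + 1)
      = ∑ j ∈ Finset.Icc 1 M, (fun i => g j i (X i)) ⬝ᵥ (Λ j).mulVec W := by
    refine Finset.sum_congr rfl fun a ha => ?_
    rw [Finset.mem_Icc] at ha
    exact eSjL a ha.1 ha.2
  have P7 : S (M + 1) 0 = S 0 (M + 1) := hSs 0 (M + 1) (by omega) (by omega)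
  have P8 : ∑ b ∈ Icc 1 M, S (M + 1) b = ∑ a ∈ Icc 1 M, S a (M + 1) := by
    refine Finset.sum_congr rfl fun b hb => ?_
    rw [Finset.mem_Icc] at hb
    exact hSs b (M + 1) (by omega) (by omega)
  have e1 : ξ t ⬝ᵥ Q.mulVec (ξ t)
      = 2 * ((∑ j ∈ Finset.Icc 1 M, X ⬝ᵥ P.mulVec ((Γ j).mulVec fun i => g j i (X i)))
            + ∑ j ∈ Finset.Icc 1 M, X ⬝ᵥ (Υ 0 j).mulVec fun i => g j i (X i))
        + 2 * (X ⬝ᵥ P.mulVec W)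
        + ((2 * ∑ j ∈ Finset.Icc 1 M,
              (fun i => g j i (X i)) ⬝ᵥ (Λ j).mulVec ((Γ j).mulVec fun i => g j i (X i)))
          + (∑ j ∈ Finset.Icc 1 M,
              (fun i => g j i (X i)) ⬝ᵥ (Ξ j).mulVec fun i => g j i (X i))
          + (2 * ∑ s ∈ Finset.Icc 1 (M - 1), ∑ z ∈ Finset.Icc (s + 1) M,
              ((fun i => g s i (X i)) ⬝ᵥ (Λ s).mulVec ((Γ z).mulVec fun i => g z i (X i))
                + (fun i => g z i (X i)) ⬝ᵥ (Λ z).mulVec ((Γ s).mulVec fun i => g s i (X i))))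
          + 2 * ∑ s ∈ Finset.Icc 1 (M - 1), ∑ z ∈ Finset.Icc (s + 1) M,
              (fun i => g s i (X i)) ⬝ᵥ (Υ s z).mulVec fun i => g z i (X i))
        + 2 * ∑ j ∈ Finset.Icc 1 M, (fun i => g j i (X i)) ⬝ᵥ (Λ j).mulVec W
        - W ⬝ᵥ Φ.mulVec W := by
    rw [hexpB]
    simp only [range_split]
    simp only [Finset.sum_add_distrib]
    rw [eS00, eS0L, eSLL, P2, P4, P5, P6, P7, P8, eS0L, P2, P6]
    simp only [Finset.sum_add_distrib]
    ring
  -- expansion of the derivative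
  have hdexp : ∀ (A : Matrix (Fin n) (Fin n) ℝ) (v : Fin n → ℝ), v ⬝ᵥ A.mulVec d
      = (∑ z ∈ Finset.Icc 1 M, v ⬝ᵥ A.mulVec ((Γ z).mulVec fun i => g z i (X i)))
        + v ⬝ᵥ A.mulVec W := by
    intro A v
    rw [hd, Matrix.mulVec_add, dotProduct_add, mv_sum, dot_sum]
  have r1 : d ⬝ᵥ P.mulVec X = X ⬝ᵥ P.mulVec d := by
    conv_lhs => rw [← hPsymm.eq]
    exact dotT P d X
  have r3 : ∑ j ∈ Finset.Icc 1 M, ∑ i, Λ j i i * (g j i (X i) * d i)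
      = ∑ j ∈ Finset.Icc 1 M, (fun i => g j i (X i)) ⬝ᵥ (Λ j).mulVec d := by
    refine Finset.sum_congr rfl fun j hj => ?_
    rw [Finset.mem_Icc] at hj
    exact (diag_dot (hΛ j hj.1 hj.2) _ d).symm
  have r5 : ∑ j ∈ Finset.Icc 1 M, ∑ z ∈ Finset.Icc 1 M,
        (fun i => g j i (X i)) ⬝ᵥ (Λ j).mulVec ((Γ z).mulVec fun i => g z i (X i))
      = (∑ j ∈ Finset.Icc 1 M,
          (fun i => g j i (X i)) ⬝ᵥ (Λ j).mulVec ((Γ j).mulVec fun i => g j i (X i)))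
        + ∑ s ∈ Finset.Icc 1 (M - 1), ∑ z ∈ Finset.Icc (s + 1) M,
            ((fun i => g s i (X i)) ⬝ᵥ (Λ s).mulVec ((Γ z).mulVec fun i => g z i (X i))
              + (fun i => g z i (X i)) ⬝ᵥ (Λ z).mulVec ((Γ s).mulVec fun i => g s i (X i))) :=
    square_split M (fun s z =>
      (fun i => g s i (X i)) ⬝ᵥ (Λ s).mulVec ((Γ z).mulVec fun i => g z i (X i)))
  have e3 : (d ⬝ᵥ P.mulVec X + X ⬝ᵥ P.mulVec d)
        + 2 * ∑ j ∈ Finset.Icc 1 M, ∑ i, Λ j i i * (g j i (X i) * d i)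
      = 2 * ((∑ j ∈ Finset.Icc 1 M, X ⬝ᵥ P.mulVec ((Γ j).mulVec fun i => g j i (X i)))
            + X ⬝ᵥ P.mulVec W)
        + 2 * ((∑ j ∈ Finset.Icc 1 M,
              (fun i => g j i (X i)) ⬝ᵥ (Λ j).mulVec ((Γ j).mulVec fun i => g j i (X i)))
          + (∑ s ∈ Finset.Icc 1 (M - 1), ∑ z ∈ Finset.Icc (s + 1) M,
              ((fun i => g s i (X i)) ⬝ᵥ (Λ s).mulVec ((Γ z).mulVec fun i => g z i (X i))
                + (fun i => g z i (X i)) ⬝ᵥ (Λ z).mulVec ((Γ s).mulVec fun i => g s i (X i))))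
          + ∑ j ∈ Finset.Icc 1 M, (fun i => g j i (X i)) ⬝ᵥ (Λ j).mulVec W) := by
    rw [r1, r3, hdexp P X]
    have : ∑ j ∈ Finset.Icc 1 M, (fun i => g j i (X i)) ⬝ᵥ (Λ j).mulVec d
        = (∑ j ∈ Finset.Icc 1 M, ∑ z ∈ Finset.Icc 1 M,
            (fun i => g j i (X i)) ⬝ᵥ (Λ j).mulVec ((Γ z).mulVec fun i => g z i (X i)))
          + ∑ j ∈ Finset.Icc 1 M, (fun i => g j i (X i)) ⬝ᵥ (Λ j).mulVec W := by
      rw [← Finset.sum_add_distrib]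
      exact Finset.sum_congr rfl fun j _ => hdexp (Λ j) _
    rw [this, r5]
    ring
  convert hVdiff using 1
  rw [e1, e3]
  ring
end

section
/- Let f_j : ℝⁿ → ℝⁿ, j ∈ {1,…,M}, be diagonal continuous nonlinearities satisfying the sector condition, and let φ ∈ {1,…,M} be such that for all s ∈ {1,…,φ} and all i ∈ {1,…,n}, lim_{ν→±∞} f_s^i(ν) = ±∞. Let Ξ^j (j ∈ {1,…,M}) and Υ_{s,z} (0 ≤ s < z ≤ M) be diagonal matrices with nonnegative entries, and suppose the diagonal matrix ∑_{k=1}^{φ} Ξ^k + 2 ∑_{s=0}^{φ} ∑_{z=s+1}^{φ} Υ_{s,z} is positive definite. Then the function W(x) = ∑_{j=1}^{M} f_j(x)^⊤ Ξ^j f_j(x) + 2 ∑_{j=1}^{M} x^⊤ Υ_{0,j} f_j(x) + 2 ∑_{s=1}^{M−1} ∑_{z=s+1}^{M} f_s(x)^⊤ Υ_{s,z} f_z(x) satisfies W(x) > 0 for all x ≠ 0 and W is radially unbounded: W(x) → +∞ as ‖x‖ → ∞. -/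
open Filter Matrix Finset

lemma diag_pos_of_posDef' {n : ℕ} {A : Matrix (Fin n) (Fin n) ℝ} (h : A.PosDef) (i : Fin n) :
    0 < A i i := by
  have := h.dotProduct_mulVec_pos (x := Pi.single i 1) (by
    intro hc
    have := congrFun hc i
    simp at this)
  simpa [Matrix.mulVec_single, dotProduct, Pi.single_apply, Finset.sum_ite_eq'] using this

lemma sector_zero (f : ℝ → ℝ) (hc : Continuous f) (hs : ∀ ν : ℝ, ν ≠ 0 → 0 < ν * f ν) :
    f 0 = 0 := by
  have hpos : ∀ ν : ℝ, 0 < ν → 0 < f ν := fun ν hν => by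
    rcases mul_pos_iff.mp (hs ν hν.ne') with ⟨_, h⟩ | ⟨h, _⟩
    · exact h
    · linarith
  have hneg : ∀ ν : ℝ, ν < 0 → f ν < 0 := fun ν hν => by
    have := hs ν hν.ne; nlinarith
  have h1 : 0 ≤ f 0 := by
    have ht : Tendsto f (nhdsWithin 0 (Set.Ioi 0)) (nhds (f 0)) :=
      (hc.tendsto 0).mono_left nhdsWithin_le_nhds
    exact ge_of_tendsto ht (eventually_nhdsWithin_of_forall fun ν hν => (hpos ν hν).le)
  have h2 : f 0 ≤ 0 := by
    have ht : Tendsto f (nhdsWithin 0 (Set.Iio 0)) (nhds (f 0)) :=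
      (hc.tendsto 0).mono_left nhdsWithin_le_nhds
    exact le_of_tendsto ht (eventually_nhdsWithin_of_forall fun ν hν => (hneg ν hν).le)
  linarith

lemma dot_diag {n : ℕ} (A : Matrix (Fin n) (Fin n) ℝ) (h : ∃ d, A = Matrix.diagonal d)
    (v w : Fin n → ℝ) : v ⬝ᵥ A.mulVec w = ∑ i, v i * (A i i * w i) := by
  obtain ⟨d, rfl⟩ := h
  simp [dotProduct, Matrix.mulVec_diagonal, Matrix.diagonal_apply_eq]

/-- Per-coordinate contribution to `W`. -/
def Tfun (n M : ℕ) (g : ℕ → Fin n → ℝ → ℝ) (Ξ : ℕ → Matrix (Fin n) (Fin n) ℝ)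
    (Υ : ℕ → ℕ → Matrix (Fin n) (Fin n) ℝ) (i : Fin n) (ν : ℝ) : ℝ :=
  (∑ j ∈ Finset.Icc 1 M, g j i ν * (Ξ j i i * g j i ν))
  + 2 * (∑ j ∈ Finset.Icc 1 M, ν * (Υ 0 j i i * g j i ν))
  + 2 * ∑ s ∈ Finset.Icc 1 (M - 1), ∑ z ∈ Finset.Icc (s + 1) M,
      g s i ν * (Υ s z i i * g z i ν)

/-- **Positivity and radial unboundedness of the dissipation function**
`W(x) = ∑_j f_jᵀ Ξʲ f_j + 2 ∑_j xᵀ Υ₀ⱼ f_j + 2 ∑_{s<z} f_sᵀ Υ_{s,z} f_z` where the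
diagonal continuous nonlinearities `f_jⁱ = g j i` satisfy the sector condition and those
with index `≤ φ` are radially unbounded, under the positive definiteness of
`∑_{k=1}^{φ} Ξᵏ + 2 ∑_{s=0}^{φ} ∑_{z=s+1}^{φ} Υ_{s,z}`. -/
theorem dissipation_posdef_radially_unbounded
    (n M : ℕ) (hM : 1 ≤ M)
    (g : ℕ → Fin n → ℝ → ℝ)
    (hcont : ∀ j, 1 ≤ j → j ≤ M → ∀ i, Continuous (g j i))
    (hsector : ∀ j, 1 ≤ j → j ≤ M → ∀ i, ∀ ν : ℝ, ν ≠ 0 → 0 < ν * g j i ν)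
    (φ : ℕ) (hφ1 : 1 ≤ φ) (hφM : φ ≤ M)
    (hradial : ∀ s, 1 ≤ s → s ≤ φ → ∀ i,
      Tendsto (g s i) atTop atTop ∧ Tendsto (g s i) atBot atBot)
    (Ξ : ℕ → Matrix (Fin n) (Fin n) ℝ) (Υ : ℕ → ℕ → Matrix (Fin n) (Fin n) ℝ)
    (hΞ : ∀ j, 1 ≤ j → j ≤ M → IsNonnegDiag (Ξ j))
    (hΥ : ∀ s z, s < z → z ≤ M → IsNonnegDiag (Υ s z))
    (hpd : (∑ k ∈ Finset.Icc 1 φ, Ξ k +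
      (2 : ℝ) • ∑ s ∈ Finset.range (φ + 1), ∑ z ∈ Finset.Icc (s + 1) φ, Υ s z).PosDef)
    (W : EuclideanSpace ℝ (Fin n) → ℝ)
    (hW : ∀ x : EuclideanSpace ℝ (Fin n),
      W x = ∑ j ∈ Finset.Icc 1 M,
              (fun i => g j i (x i)) ⬝ᵥ (Ξ j).mulVec (fun i => g j i (x i))
          + 2 * ∑ j ∈ Finset.Icc 1 M, (x : Fin n → ℝ) ⬝ᵥ (Υ 0 j).mulVec (fun i => g j i (x i))
          + 2 * ∑ s ∈ Finset.Icc 1 (M - 1), ∑ z ∈ Finset.Icc (s + 1) M,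
              (fun i => g s i (x i)) ⬝ᵥ (Υ s z).mulVec (fun i => g z i (x i))) :
    (∀ x : EuclideanSpace ℝ (Fin n), x ≠ 0 → 0 < W x) ∧
      (∀ c : ℝ, 0 < c → ∃ R : ℝ, 0 < R ∧
        ∀ x : EuclideanSpace ℝ (Fin n), R ≤ ‖x‖ → c ≤ W x) := by
  -- entrywise facts about the matrices
  have hΞe : ∀ j, 1 ≤ j → j ≤ M → ∀ i, 0 ≤ Ξ j i i := by
    intro j h1 h2 i
    obtain ⟨d, hd0, hdeq⟩ := hΞ j h1 h2
    rw [hdeq]; simpa using hd0 i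
  have hΥe : ∀ s z, s < z → z ≤ M → ∀ i, 0 ≤ Υ s z i i := by
    intro s z h1 h2 i
    obtain ⟨d, hd0, hdeq⟩ := hΥ s z h1 h2
    rw [hdeq]; simpa using hd0 i
  -- sign facts about g
  have hg0 : ∀ j, 1 ≤ j → j ≤ M → ∀ i, g j i 0 = 0 := fun j h1 h2 i =>
    sector_zero _ (hcont j h1 h2 i) (hsector j h1 h2 i)
  have hsec0 : ∀ j, 1 ≤ j → j ≤ M → ∀ i (ν : ℝ), 0 ≤ ν * g j i ν := by
    intro j h1 h2 i ν
    rcases eq_or_ne ν 0 with rfl | h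
    · simp
    · exact (hsector j h1 h2 i ν h).le
  have hmul' : ∀ s z, 1 ≤ s → s ≤ M → 1 ≤ z → z ≤ M → ∀ i (ν : ℝ), ν ≠ 0 →
      0 < g s i ν * g z i ν := by
    intro s z hs1 hs2 hz1 hz2 i ν hν
    have sign : ∀ w, 1 ≤ w → w ≤ M → (0 < ν → 0 < g w i ν) ∧ (ν < 0 → g w i ν < 0) := by
      intro w hw1 hw2
      constructor
      · intro h
        rcases mul_pos_iff.mp (hsector w hw1 hw2 i ν h.ne') with ⟨_, h'⟩ | ⟨h', _⟩
        · exact h'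
        · linarith
      · intro h
        rcases mul_pos_iff.mp (hsector w hw1 hw2 i ν h.ne) with ⟨h', _⟩ | ⟨_, h'⟩
        · linarith
        · exact h'
    rcases lt_trichotomy ν 0 with h | h | h
    · exact mul_pos_of_neg_of_neg ((sign s hs1 hs2).2 h) ((sign z hz1 hz2).2 h)
    · exact absurd h hν
    · exact mul_pos ((sign s hs1 hs2).1 h) ((sign z hz1 hz2).1 h)
  have hmul : ∀ s z, 1 ≤ s → s ≤ M → 1 ≤ z → z ≤ M → ∀ i (ν : ℝ),
      0 ≤ g s i ν * g z i ν := by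
    intro s z hs1 hs2 hz1 hz2 i ν
    rcases eq_or_ne ν 0 with rfl | h
    · rw [hg0 s hs1 hs2 i]; simp
    · exact (hmul' s z hs1 hs2 hz1 hz2 i ν h).le
  -- nonnegativity of individual terms
  have hA : ∀ i (ν : ℝ) j, 1 ≤ j → j ≤ M → 0 ≤ g j i ν * (Ξ j i i * g j i ν) := by
    intro i ν j h1 h2
    have := hΞe j h1 h2 i
    nlinarith [mul_self_nonneg (g j i ν)]
  have hB : ∀ i (ν : ℝ) j, 1 ≤ j → j ≤ M → 0 ≤ ν * (Υ 0 j i i * g j i ν) := by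
    intro i ν j h1 h2
    have h := mul_nonneg (hΥe 0 j h1 h2 i) (hsec0 j h1 h2 i ν)
    nlinarith [h]
  have hC : ∀ i (ν : ℝ) s z, 1 ≤ s → s < z → z ≤ M →
      0 ≤ g s i ν * (Υ s z i i * g z i ν) := by
    intro i ν s z h1 h2 h3
    have h := mul_nonneg (hΥe s z h2 h3 i) (hmul s z h1 (by omega) (by omega) h3 i ν)
    nlinarith [h]
  -- sum-part nonnegativity
  have hAsum : ∀ i (ν : ℝ), 0 ≤ ∑ j ∈ Finset.Icc 1 M, g j i ν * (Ξ j i i * g j i ν) :=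
    fun i ν => Finset.sum_nonneg fun j hj => by
      obtain ⟨h1, h2⟩ := Finset.mem_Icc.mp hj; exact hA i ν j h1 h2
  have hBsum : ∀ i (ν : ℝ), 0 ≤ ∑ j ∈ Finset.Icc 1 M, ν * (Υ 0 j i i * g j i ν) :=
    fun i ν => Finset.sum_nonneg fun j hj => by
      obtain ⟨h1, h2⟩ := Finset.mem_Icc.mp hj; exact hB i ν j h1 h2
  have hCsum : ∀ i (ν : ℝ), 0 ≤ ∑ s ∈ Finset.Icc 1 (M - 1), ∑ z ∈ Finset.Icc (s + 1) M,
      g s i ν * (Υ s z i i * g z i ν) :=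
    fun i ν => Finset.sum_nonneg fun s hs => Finset.sum_nonneg fun z hz => by
      obtain ⟨hs1, _⟩ := Finset.mem_Icc.mp hs
      obtain ⟨hz1, hz2⟩ := Finset.mem_Icc.mp hz
      exact hC i ν s z hs1 (by omega) hz2
  have hTnonneg : ∀ i (ν : ℝ), 0 ≤ Tfun n M g Ξ Υ i ν := by
    intro i ν
    unfold Tfun
    have := hAsum i ν; have := hBsum i ν; have := hCsum i ν
    linarith
  -- W as a sum of per-coordinate terms
  have hWsum : ∀ x : EuclideanSpace ℝ (Fin n), W x = ∑ i, Tfun n M g Ξ Υ i (x i) := by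
    intro x
    rw [hW]
    have e1 : ∑ j ∈ Finset.Icc 1 M,
        (fun i => g j i (x i)) ⬝ᵥ (Ξ j).mulVec (fun i => g j i (x i))
        = ∑ i, ∑ j ∈ Finset.Icc 1 M, g j i (x i) * (Ξ j i i * g j i (x i)) := by
      rw [Finset.sum_congr rfl fun j hj => by
        obtain ⟨h1, h2⟩ := Finset.mem_Icc.mp hj
        exact dot_diag (Ξ j) ⟨_, (hΞ j h1 h2).choose_spec.2⟩ _ _]
      exact Finset.sum_comm
    have e2 : ∑ j ∈ Finset.Icc 1 M, (x : Fin n → ℝ) ⬝ᵥ (Υ 0 j).mulVec (fun i => g j i (x i))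
        = ∑ i, ∑ j ∈ Finset.Icc 1 M, x i * (Υ 0 j i i * g j i (x i)) := by
      rw [Finset.sum_congr rfl fun j hj => by
        obtain ⟨h1, h2⟩ := Finset.mem_Icc.mp hj
        exact dot_diag (Υ 0 j) ⟨_, (hΥ 0 j h1 h2).choose_spec.2⟩ _ _]
      exact Finset.sum_comm
    have e3 : ∑ s ∈ Finset.Icc 1 (M - 1), ∑ z ∈ Finset.Icc (s + 1) M,
        (fun i => g s i (x i)) ⬝ᵥ (Υ s z).mulVec (fun i => g z i (x i))
        = ∑ i, ∑ s ∈ Finset.Icc 1 (M - 1), ∑ z ∈ Finset.Icc (s + 1) M,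
            g s i (x i) * (Υ s z i i * g z i (x i)) := by
      rw [Finset.sum_congr rfl fun s hs => Finset.sum_congr rfl fun z hz => by
        obtain ⟨hs1, _⟩ := Finset.mem_Icc.mp hs
        obtain ⟨hz1, hz2⟩ := Finset.mem_Icc.mp hz
        exact dot_diag (Υ s z) ⟨_, (hΥ s z (by omega) hz2).choose_spec.2⟩ _ _]
      rw [Finset.sum_congr rfl fun s _ => Finset.sum_comm]
      exact Finset.sum_comm
    rw [e1, e2, e3, Finset.mul_sum, Finset.mul_sum, ← Finset.sum_add_distrib,
      ← Finset.sum_add_distrib]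
    rfl
  -- positive coefficient per coordinate
  have hSd : ∀ i, 0 < ∑ k ∈ Finset.Icc 1 φ, Ξ k i i
      + 2 * ∑ s ∈ Finset.range (φ + 1), ∑ z ∈ Finset.Icc (s + 1) φ, Υ s z i i := by
    intro i
    have := diag_pos_of_posDef' hpd i
    simpa [Matrix.sum_apply, Matrix.smul_apply, Matrix.add_apply, smul_eq_mul] using this
  have hkey : ∀ i, (∃ k, 1 ≤ k ∧ k ≤ φ ∧ 0 < Ξ k i i)
      ∨ (∃ z, 1 ≤ z ∧ z ≤ φ ∧ 0 < Υ 0 z i i)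
      ∨ (∃ s z, 1 ≤ s ∧ s < z ∧ z ≤ φ ∧ 0 < Υ s z i i) := by
    intro i
    by_contra hcon
    push_neg at hcon
    obtain ⟨h1, h2, h3⟩ := hcon
    have e1 : ∑ k ∈ Finset.Icc 1 φ, Ξ k i i ≤ 0 := Finset.sum_nonpos fun k hk => by
      obtain ⟨a, b⟩ := Finset.mem_Icc.mp hk; exact h1 k a b
    have e2 : ∑ s ∈ Finset.range (φ + 1), ∑ z ∈ Finset.Icc (s + 1) φ, Υ s z i i ≤ 0 :=
      Finset.sum_nonpos fun s _ => Finset.sum_nonpos fun z hz => by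
        obtain ⟨hz1, hz2⟩ := Finset.mem_Icc.mp hz
        rcases Nat.eq_zero_or_pos s with rfl | hs1
        · exact h2 z hz1 hz2
        · exact h3 s z hs1 (by omega) hz2
    linarith [hSd i]
  -- dominating single positive term with good asymptotics
  have hTlow : ∀ i, ∃ P : ℝ → ℝ, (∀ ν, P ν ≤ Tfun n M g Ξ Υ i ν) ∧
      (∀ ν : ℝ, ν ≠ 0 → 0 < P ν) ∧ Tendsto P atTop atTop ∧ Tendsto P atBot atTop := by
    intro i
    rcases hkey i with ⟨k, hk1, hk2, hkpos⟩ | ⟨z, hz1, hz2, hzpos⟩ |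
      ⟨s, z, hs1, hsz, hz2, hpos⟩
    · refine ⟨fun ν => g k i ν * (Ξ k i i * g k i ν), ?_, ?_, ?_, ?_⟩
      · intro ν
        have hle : g k i ν * (Ξ k i i * g k i ν)
            ≤ ∑ j ∈ Finset.Icc 1 M, g j i ν * (Ξ j i i * g j i ν) :=
          Finset.single_le_sum (fun j hj => by
            obtain ⟨a, b⟩ := Finset.mem_Icc.mp hj; exact hA i ν j a b)
            (Finset.mem_Icc.mpr ⟨hk1, le_trans hk2 hφM⟩)
        have := hBsum i ν; have := hCsum i ν
        show g k i ν * (Ξ k i i * g k i ν) ≤ _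
        unfold Tfun; linarith
      · intro ν hν
        have := hmul' k k hk1 (le_trans hk2 hφM) hk1 (le_trans hk2 hφM) i ν hν
        show 0 < g k i ν * (Ξ k i i * g k i ν)
        nlinarith
      · exact (hradial k hk1 hk2 i).1.atTop_mul_atTop₀
          ((hradial k hk1 hk2 i).1.const_mul_atTop hkpos)
      · exact (hradial k hk1 hk2 i).2.atBot_mul_atBot₀
          ((hradial k hk1 hk2 i).2.const_mul_atBot hkpos)
    · refine ⟨fun ν => 2 * (ν * (Υ 0 z i i * g z i ν)), ?_, ?_, ?_, ?_⟩
      · intro ν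
        have hle : ν * (Υ 0 z i i * g z i ν)
            ≤ ∑ j ∈ Finset.Icc 1 M, ν * (Υ 0 j i i * g j i ν) :=
          Finset.single_le_sum (fun j hj => by
            obtain ⟨a, b⟩ := Finset.mem_Icc.mp hj; exact hB i ν j a b)
            (Finset.mem_Icc.mpr ⟨hz1, le_trans hz2 hφM⟩)
        have := hAsum i ν; have := hCsum i ν
        show 2 * (ν * (Υ 0 z i i * g z i ν)) ≤ _
        unfold Tfun; linarith
      · intro ν hν
        have := hsector z hz1 (le_trans hz2 hφM) i ν hν
        show 0 < 2 * (ν * (Υ 0 z i i * g z i ν))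
        nlinarith
      · have h1 : Tendsto (fun ν : ℝ => ν * (Υ 0 z i i * g z i ν)) atTop atTop :=
          Tendsto.atTop_mul_atTop₀ tendsto_id
            ((hradial z hz1 hz2 i).1.const_mul_atTop hzpos)
        exact h1.const_mul_atTop (by norm_num)
      · have h1 : Tendsto (fun ν : ℝ => ν * (Υ 0 z i i * g z i ν)) atBot atTop :=
          Tendsto.atBot_mul_atBot₀ tendsto_id
            ((hradial z hz1 hz2 i).2.const_mul_atBot hzpos)
        exact h1.const_mul_atTop (by norm_num)
    · have hsM : s ≤ M := by omega
      have hzM : z ≤ M := by omega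
      have hz1 : 1 ≤ z := by omega
      refine ⟨fun ν => 2 * (g s i ν * (Υ s z i i * g z i ν)), ?_, ?_, ?_, ?_⟩
      · intro ν
        have hle1 : ∑ z' ∈ Finset.Icc (s + 1) M, g s i ν * (Υ s z' i i * g z' i ν)
            ≤ ∑ s' ∈ Finset.Icc 1 (M - 1), ∑ z' ∈ Finset.Icc (s' + 1) M,
                g s' i ν * (Υ s' z' i i * g z' i ν) :=
          Finset.single_le_sum
            (f := fun s' => ∑ z' ∈ Finset.Icc (s' + 1) M, g s' i ν * (Υ s' z' i i * g z' i ν))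
            (fun s' hs' => Finset.sum_nonneg fun z' hz' => by
            obtain ⟨a, _⟩ := Finset.mem_Icc.mp hs'
            obtain ⟨b, c⟩ := Finset.mem_Icc.mp hz'
            exact hC i ν s' z' a (by omega) c)
            (Finset.mem_Icc.mpr ⟨hs1, by omega⟩)
        have hzmem : z ∈ Finset.Icc (s + 1) M := Finset.mem_Icc.mpr ⟨by omega, hzM⟩
        have hle2 : g s i ν * (Υ s z i i * g z i ν)
            ≤ ∑ z' ∈ Finset.Icc (s + 1) M, g s i ν * (Υ s z' i i * g z' i ν) :=
          Finset.single_le_sum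
            (f := fun z' => g s i ν * (Υ s z' i i * g z' i ν))
            (fun z' hz' => by
              obtain ⟨b, c⟩ := Finset.mem_Icc.mp hz'
              exact hC i ν s z' hs1 (by omega) c)
            hzmem
        have := hAsum i ν; have := hBsum i ν
        show 2 * (g s i ν * (Υ s z i i * g z i ν)) ≤ _
        unfold Tfun; linarith
      · intro ν hν
        have := hmul' s z hs1 hsM hz1 hzM i ν hν
        show 0 < 2 * (g s i ν * (Υ s z i i * g z i ν))
        nlinarith
      · have h1 : Tendsto (fun ν : ℝ => g s i ν * (Υ s z i i * g z i ν)) atTop atTop :=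
          Tendsto.atTop_mul_atTop₀ (hradial s hs1 (by omega) i).1
            ((hradial z hz1 hz2 i).1.const_mul_atTop hpos)
        exact h1.const_mul_atTop (by norm_num)
      · have h1 : Tendsto (fun ν : ℝ => g s i ν * (Υ s z i i * g z i ν)) atBot atTop :=
          Tendsto.atBot_mul_atBot₀ (hradial s hs1 (by omega) i).2
            ((hradial z hz1 hz2 i).2.const_mul_atBot hpos)
        exact h1.const_mul_atTop (by norm_num)
  constructor
  · intro x hx
    obtain ⟨i, hi⟩ : ∃ i, x i ≠ 0 := by
      by_contra hcc
      push_neg at hcc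
      exact hx (by ext i; exact hcc i)
    obtain ⟨P, hle, hpos, -, -⟩ := hTlow i
    have h1 : 0 < P (x i) := hpos _ hi
    have h2 : Tfun n M g Ξ Υ i (x i) ≤ ∑ j, Tfun n M g Ξ Υ j (x j) :=
      Finset.single_le_sum (fun j _ => hTnonneg j (x j)) (Finset.mem_univ i)
    rw [hWsum]
    linarith [hle (x i)]
  · intro c hc
    have hRi : ∀ i : Fin n, ∃ r : ℝ, 1 ≤ r ∧ ∀ ν : ℝ, r ≤ |ν| → c ≤ Tfun n M g Ξ Υ i ν := by
      intro i
      obtain ⟨P, hle, -, htop, hbot⟩ := hTlow i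
      obtain ⟨a, ha⟩ := eventually_atTop.mp (htop.eventually_ge_atTop c)
      obtain ⟨b, hb⟩ := eventually_atBot.mp (hbot.eventually_ge_atTop c)
      refine ⟨max 1 (max a (-b)), le_max_left _ _, fun ν hν => ?_⟩
      rcases le_or_gt 0 ν with h | h
      · rw [abs_of_nonneg h] at hν
        have : a ≤ ν := le_trans (le_trans (le_max_left a (-b)) (le_max_right 1 _)) hν
        exact le_trans (ha ν this) (hle ν)
      · rw [abs_of_neg h] at hν
        have hνb : ν ≤ b := by
          have : -b ≤ max 1 (max a (-b)) := le_trans (le_max_right a (-b)) (le_max_right 1 _)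
          linarith
        exact le_trans (hb ν hνb) (hle ν)
    choose r hr1 hr2 using hRi
    have hsum0 : (0:ℝ) ≤ ∑ i, r i := Finset.sum_nonneg fun i _ => by linarith [hr1 i]
    set r0 : ℝ := 1 + ∑ i, r i with hr0def
    have hr0pos : (1:ℝ) ≤ r0 := by rw [hr0def]; linarith
    have hrler0 : ∀ i, r i ≤ r0 := by
      intro i
      have h1 : r i ≤ ∑ j, r j :=
        Finset.single_le_sum (fun j _ => by linarith [hr1 j]) (Finset.mem_univ i)
      rw [hr0def]; linarith
    refine ⟨(Real.sqrt n + 1) * r0, by nlinarith [Real.sqrt_nonneg (n:ℝ)], ?_⟩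
    intro x hx
    rcases Nat.eq_zero_or_pos n with hn | hn
    · exfalso
      have hx0 : x = 0 := by
        ext i
        exact absurd i.isLt (by omega)
      rw [hx0, norm_zero] at hx
      nlinarith [Real.sqrt_nonneg (n:ℝ)]
    · obtain ⟨i, -, himax⟩ := Finset.exists_max_image Finset.univ (fun j => |x j|)
        ⟨⟨0, hn⟩, Finset.mem_univ _⟩
      have hnorm : ‖x‖^2 = ∑ j, (x j)^2 := by
        rw [EuclideanSpace.norm_eq, Real.sq_sqrt (Finset.sum_nonneg fun j _ => sq_nonneg _)]
        simp [Real.norm_eq_abs, sq_abs]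
      have hle2 : ‖x‖^2 ≤ (n:ℝ) * (x i)^2 := by
        rw [hnorm]
        calc ∑ j, (x j)^2 ≤ ∑ _j : Fin n, (x i)^2 := Finset.sum_le_sum fun j _ => by
              have hmax := himax j (Finset.mem_univ j)
              calc (x j)^2 = |x j|^2 := (sq_abs _).symm
                _ ≤ |x i|^2 := by nlinarith [abs_nonneg (x j)]
                _ = (x i)^2 := sq_abs _
          _ = (n:ℝ) * (x i)^2 := by
              simp [Finset.sum_const, Finset.card_univ, nsmul_eq_mul]
      have hR0 : (0:ℝ) ≤ (Real.sqrt n + 1) * r0 := by nlinarith [Real.sqrt_nonneg (n:ℝ)]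
      have hR2 : ((Real.sqrt n + 1) * r0)^2 ≤ ‖x‖^2 := by
        have := pow_le_pow_left₀ hR0 hx 2
        simpa using this
      have hsq : (Real.sqrt n)^2 = (n:ℝ) := Real.sq_sqrt (Nat.cast_nonneg n)
      have hn1 : (1:ℝ) ≤ (n:ℝ) := by exact_mod_cast hn
      have hxi2 : r0^2 ≤ (x i)^2 := by
        have e : (n:ℝ) * r0^2 ≤ (n:ℝ) * (x i)^2 := by
          nlinarith [mul_nonneg (Real.sqrt_nonneg (n:ℝ)) (sq_nonneg r0), sq_nonneg r0]
        have hnpos : (0:ℝ) < n := by linarith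
        exact le_of_mul_le_mul_left e hnpos
      have hxi : r0 ≤ |x i| := by
        nlinarith [abs_nonneg (x i), sq_abs (x i)]
      have hc2 : c ≤ Tfun n M g Ξ Υ i (x i) := hr2 i (x i) (le_trans (hrler0 i) hxi)
      rw [hWsum]
      have hfin := Finset.single_le_sum (f := fun j => Tfun n M g Ξ Υ j (x j))
        (fun j _ => hTnonneg j (x j)) (Finset.mem_univ i)
      linarith
end
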